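/- arXiv:2509.10410 — 4 statements merged into one kernel-verified Lean document; each statement's English description precedes it below -/
import Mathlib

section
/- Let α > 0 and define G(u) = (α − 1)e^{−4u} + (α/2)(e^{2u} − 3e^{−2u}) + 1. Then G(0) = 0, G(u) → +∞ as u → +∞, and G(u) ≥ 0 for every u ≥ 0. -/
/-- For `α > 0` and
`G(u) = (α − 1)e^{−4u} + (α/2)(e^{2u} − 3e^{−2u}) + 1`, one has `G(0) = 0`,
`G(u) → +∞` as `u → +∞`, and `G(u) ≥ 0` for every `u ≥ 0`. -/
theorem stmt_1 (α : ℝ) (hα : 0 < α)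
    (G : ℝ → ℝ)
    (hG : ∀ u : ℝ, G u =
      (α - 1) * Real.exp (-4 * u) + (α / 2) * (Real.exp (2 * u) - 3 * Real.exp (-2 * u)) + 1) :
    G 0 = 0 ∧
    Filter.Tendsto G Filter.atTop Filter.atTop ∧
    (∀ u : ℝ, 0 ≤ u → 0 ≤ G u) := by
  refine ⟨by simp [hG]; ring, ?_, ?_⟩
  · have h2u : Filter.Tendsto (fun u : ℝ => 2 * u) Filter.atTop Filter.atTop :=
      Filter.Tendsto.const_mul_atTop two_pos Filter.tendsto_id
    have hm4u : Filter.Tendsto (fun u : ℝ => -4 * u) Filter.atTop Filter.atBot :=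
      (Filter.tendsto_const_mul_atBot_of_neg (by norm_num)).mpr Filter.tendsto_id
    have hm2u : Filter.Tendsto (fun u : ℝ => -2 * u) Filter.atTop Filter.atBot :=
      (Filter.tendsto_const_mul_atBot_of_neg (by norm_num)).mpr Filter.tendsto_id
    have h1 : Filter.Tendsto (fun u : ℝ => (α / 2) * Real.exp (2 * u)) Filter.atTop Filter.atTop :=
      Filter.Tendsto.const_mul_atTop (by positivity) (Real.tendsto_exp_atTop.comp h2u)
    have h2 : Filter.Tendsto
        (fun u : ℝ => (α - 1) * Real.exp (-4 * u) - (α / 2) * (3 * Real.exp (-2 * u)) + 1)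
        Filter.atTop (nhds ((α - 1) * 0 - (α / 2) * (3 * 0) + 1)) := by
      exact (((Real.tendsto_exp_atBot.comp hm4u).const_mul _).sub
        (((Real.tendsto_exp_atBot.comp hm2u).const_mul 3).const_mul _)).add_const 1
    have := Filter.Tendsto.atTop_add h1 h2
    apply this.congr
    intro u
    rw [hG u]; ring
  · intro u hu
    rw [hG u]
    set x := Real.exp (-2 * u) with hxdef
    have hx0 : 0 < x := Real.exp_pos _
    have hx1 : x ≤ 1 := Real.exp_le_one_iff.mpr (by linarith)
    have hxy : Real.exp (2 * u) * x = 1 := by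
      rw [hxdef, ← Real.exp_add]; norm_num
    have hx2 : Real.exp (-4 * u) = x * x := by
      rw [hxdef, ← Real.exp_add]; ring_nf
    rw [hx2]
    set y := Real.exp (2 * u) with hydef
    nlinarith [mul_pos hx0 hx0, sq_nonneg (x - 1), mul_nonneg (sub_nonneg.2 hx1) hx0.le,
      mul_nonneg (mul_nonneg (sub_nonneg.2 hx1) hx0.le) hx0.le, mul_pos hα hx0,
      mul_nonneg (mul_nonneg hα.le (sub_nonneg.2 hx1)) hx0.le,
      mul_nonneg (mul_nonneg (mul_nonneg hα.le (sub_nonneg.2 hx1)) hx0.le) hx0.le,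
      sq_nonneg (x*y - 1)]
end

section
/- (Lemma 1, maximum bound.) Fix real constants R₁, R₂ with 0 < R₁ < R₂, set L = log(R₂/R₁) and I = [0, L], fix α > 0, ω > 0, C > 0, μ ∈ ℝ and 0 < M₁ < M₂, and let f(y, u) = h(y, u) + g(y, u) as below. If u : I → ℝ is a C² function with u(y) > 0 on I satisfying (e^{−2y}u′(y))′ = f(y, u(y)) for y ∈ (0, L), u(0) = M₁ and u(L) = M₂, then u(y) ≤ max(M₂, (1/2) log((R₂²/C)e^{−μ−1} + 1)) for every y ∈ I. -/
set_option maxHeartbeats 1000000 in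
/-- Lemma 1, maximum bound: Fix `0 < R₁ < R₂`, `L = log(R₂/R₁)`,
`I = [0, L]`, constants `α, ω, C > 0`, `μ ∈ ℝ`, `0 < M₁ < M₂`, and let
`f(y,u) = 2e^{−2y}G(u) + ω²(log(C(e^{2u} − 1)/R₁²) − 2y + μ + 1)e^{2u}` with
`G(u) = (α − 1)e^{−4u} + (α/2)(e^{2u} − 3e^{−2u}) + 1`.  If `u : I → ℝ` is a
C² function, positive on `I`, satisfying `(e^{−2y}u′(y))′ = f(y, u(y))` on
`(0, L)` with `u(0) = M₁`, `u(L) = M₂`, then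
`u(y) ≤ max(M₂, (1/2)log((R₂²/C)e^{−μ−1} + 1))` on `I`. -/
theorem stmt_5 (R₁ R₂ : ℝ) (hR₁ : 0 < R₁) (hR : R₁ < R₂)
    (α ω C μ M₁ M₂ : ℝ) (hα : 0 < α) (hω : 0 < ω) (hC : 0 < C)
    (hM₁ : 0 < M₁) (hM : M₁ < M₂)
    (L : ℝ) (hL : L = Real.log (R₂ / R₁))
    (f : ℝ → ℝ → ℝ)
    (hf : ∀ y u : ℝ, f y u =
      2 * Real.exp (-2 * y) *
        ((α - 1) * Real.exp (-4 * u) + (α / 2) * (Real.exp (2 * u) - 3 * Real.exp (-2 * u)) + 1)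
      + ω ^ 2 * (Real.log (C * (Real.exp (2 * u) - 1) / R₁ ^ 2) - 2 * y + μ + 1) *
          Real.exp (2 * u))
    (u : ℝ → ℝ)
    (hu : ContDiffOn ℝ 2 u (Set.Icc 0 L))
    (hupos : ∀ y ∈ Set.Icc (0 : ℝ) L, 0 < u y)
    (heq : ∀ y ∈ Set.Ioo (0 : ℝ) L,
      deriv (fun t => Real.exp (-2 * t) * deriv u t) y = f y (u y))
    (hbc0 : u 0 = M₁) (hbcL : u L = M₂) :
    ∀ y ∈ Set.Icc (0 : ℝ) L,
      u y ≤ max M₂ ((1 / 2) * Real.log ((R₂ ^ 2 / C) * Real.exp (-μ - 1) + 1)) := by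
  set K := max M₂ ((1 / 2) * Real.log ((R₂ ^ 2 / C) * Real.exp (-μ - 1) + 1)) with hKdef
  intro y hy
  by_contra hcon
  push_neg at hcon
  have hL0 : 0 < L := by
    rw [hL]; exact Real.log_pos ((one_lt_div hR₁).mpr hR)
  have hR₂ : 0 < R₂ := hR₁.trans hR
  have hM₂K : M₂ ≤ K := le_max_left _ _
  have hK₂ : (1 / 2) * Real.log ((R₂ ^ 2 / C) * Real.exp (-μ - 1) + 1) ≤ K := le_max_right _ _
  -- f is positive whenever t ∈ (0,L) and v > K
  have f_pos : ∀ t v : ℝ, t ∈ Set.Ioo (0:ℝ) L → K < v → 0 < f t v := by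
    intro t v ht hv
    have hv0 : 0 < v := lt_trans (lt_of_lt_of_le (lt_trans hM₁ hM) hM₂K) hv
    -- G positivity
    have hb : 1 < Real.exp (2 * v) := by
      rw [Real.one_lt_exp_iff]; linarith
    have hb0 : 0 < Real.exp (2 * v) := Real.exp_pos _
    have hainv : Real.exp (-2 * v) = 1 / Real.exp (2 * v) := by
      rw [show (-2 : ℝ) * v = -(2 * v) by ring, Real.exp_neg, one_div]
    have ha4 : Real.exp (-4 * v) = (1 / Real.exp (2 * v)) ^ 2 := by
      rw [show (-4 : ℝ) * v = (-(2 * v)) * 2 by ring, Real.exp_mul, Real.exp_neg,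
        Real.rpow_two, one_div, inv_pow]
    set b := Real.exp (2 * v) with hbdef
    have hG : 0 < (α - 1) * Real.exp (-4 * v) + (α / 2) * (b - 3 * Real.exp (-2 * v)) + 1 := by
      rw [ha4, hainv]
      have key : ((α - 1) * (1/b) ^ 2 + (α / 2) * (b - 3 * (1/b)) + 1) * (2*b^2)
          = α*((b-1)^2*(b+2)) + 2*(b^2-1) := by field_simp; ring
      have hrhs : 0 < α*((b-1)^2*(b+2)) + 2*(b^2-1) := by
        have : (0:ℝ) < b^2 - 1 := by nlinarith
        have h1 : (0:ℝ) ≤ α * ((b - 1) ^ 2 * (b + 2)) := by positivity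
        linarith
      nlinarith [key, hrhs, sq_nonneg b]
    -- log bracket positivity
    have hA : (0:ℝ) < R₂ ^ 2 / C * Real.exp (-μ - 1) :=
      mul_pos (div_pos (pow_pos hR₂ 2) hC) (Real.exp_pos _)
    have h2v : Real.log (R₂ ^ 2 / C * Real.exp (-μ - 1) + 1) < 2 * v := by linarith
    have hexp : R₂ ^ 2 / C * Real.exp (-μ - 1) + 1 < b := by
      rw [hbdef]
      calc R₂ ^ 2 / C * Real.exp (-μ - 1) + 1
          = Real.exp (Real.log (R₂ ^ 2 / C * Real.exp (-μ - 1) + 1)) :=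
            (Real.exp_log (by linarith)).symm
        _ < Real.exp (2 * v) := Real.exp_lt_exp.mpr h2v
    have hE : R₂ ^ 2 / C * Real.exp (-μ - 1) < b - 1 := by linarith
    have harg : (R₂ / R₁) ^ 2 * Real.exp (-μ - 1) < C * (b - 1) / R₁ ^ 2 := by
      have : C * (R₂ ^ 2 / C * Real.exp (-μ - 1)) / R₁ ^ 2 < C * (b - 1) / R₁ ^ 2 := by
        gcongr
      calc (R₂ / R₁) ^ 2 * Real.exp (-μ - 1)
          = C * (R₂ ^ 2 / C * Real.exp (-μ - 1)) / R₁ ^ 2 := by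
            field_simp
        _ < C * (b - 1) / R₁ ^ 2 := this
    have hlog : 2 * L + (-μ - 1) < Real.log (C * (b - 1) / R₁ ^ 2) := by
      have h1 : Real.log ((R₂ / R₁) ^ 2 * Real.exp (-μ - 1)) < Real.log (C * (b - 1) / R₁ ^ 2) :=
        Real.log_lt_log (mul_pos (pow_pos (div_pos hR₂ hR₁) 2) (Real.exp_pos _)) harg
      have h2 : Real.log ((R₂ / R₁) ^ 2 * Real.exp (-μ - 1))
          = 2 * Real.log (R₂ / R₁) + (-μ - 1) := by
        rw [Real.log_mul (ne_of_gt (pow_pos (div_pos hR₂ hR₁) 2)) (Real.exp_ne_zero _),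
          Real.log_exp,
          Real.log_pow]
        push_cast; ring
      rw [h2, ← hL] at h1
      exact h1
    have hB : 0 < Real.log (C * (b - 1) / R₁ ^ 2) - 2 * t + μ + 1 := by
      have := ht.2
      linarith
    rw [hf]
    have hg : 0 < ω ^ 2 * (Real.log (C * (Real.exp (2 * v) - 1) / R₁ ^ 2) - 2 * t + μ + 1) *
        Real.exp (2 * v) := by
      apply mul_pos (mul_pos (by positivity) _) hb0
      exact hB
    have hh : 0 < 2 * Real.exp (-2 * t) *
        ((α - 1) * Real.exp (-4 * v) + (α / 2) * (Real.exp (2 * v) - 3 * Real.exp (-2 * v)) + 1) :=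
      mul_pos (by positivity) hG
    linarith
  -- maximum point
  obtain ⟨y₀, hy₀I, hmax⟩ := isCompact_Icc.exists_isMaxOn ⟨y, hy⟩ hu.continuousOn
  have hKu : K < u y₀ := lt_of_lt_of_le hcon (hmax hy)
  have hy₀ : y₀ ∈ Set.Ioo (0:ℝ) L := by
    refine ⟨lt_of_le_of_ne hy₀I.1 ?_, lt_of_le_of_ne hy₀I.2 ?_⟩
    · intro h; rw [h] at hbc0; rw [hbc0] at hKu; linarith
    · intro h; rw [← h] at hbcL; rw [hbcL] at hKu; linarith
  have hnhds : Set.Icc (0:ℝ) L ∈ nhds y₀ := Icc_mem_nhds hy₀.1 hy₀.2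
  have hderiv0 : deriv u y₀ = 0 := ((hmax.isLocalMax hnhds)).deriv_eq_zero
  -- find b with u > K on [y₀, b] ⊆ (0,L)
  have hcu : ContinuousAt u y₀ := hu.continuousOn.continuousAt hnhds
  have hV : {t : ℝ | K < u t} ∩ Set.Ioo 0 L ∈ nhds y₀ :=
    Filter.inter_mem (hcu.eventually (eventually_gt_nhds hKu)) (Ioo_mem_nhds hy₀.1 hy₀.2)
  obtain ⟨ε, hε0, hball⟩ := Metric.mem_nhds_iff.mp hV
  set c := y₀ + ε / 2 with hcdef
  have hy₀c : y₀ < c := by simp [hcdef]; linarith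
  have hsub : Set.Icc y₀ c ⊆ {t : ℝ | K < u t} ∩ Set.Ioo 0 L := by
    intro t htc
    apply hball
    rw [Metric.mem_ball, Real.dist_eq, abs_lt]
    constructor <;> [linarith [htc.1]; skip]
    have := htc.2
    simp only [hcdef] at this
    linarith
  have hcIoo : c ∈ Set.Ioo (0:ℝ) L := (hsub (Set.right_mem_Icc.mpr hy₀c.le)).2
  have hIccIoo : Set.Icc y₀ c ⊆ Set.Ioo (0:ℝ) L := fun t ht => (hsub ht).2
  have hIccIcc : Set.Icc y₀ c ⊆ Set.Icc (0:ℝ) L := hIccIoo.trans Set.Ioo_subset_Icc_self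
  -- deriv u is continuous on Ioo 0 L
  have hderivc : ContinuousOn (deriv u) (Set.Ioo 0 L) :=
    (hu.mono Set.Ioo_subset_Icc_self).continuousOn_deriv_of_isOpen isOpen_Ioo one_le_two
  set w : ℝ → ℝ := fun t => Real.exp (-2 * t) * deriv u t with hwdef
  have hwc : ContinuousOn w (Set.Icc y₀ c) :=
    ((by fun_prop : Continuous fun t : ℝ => Real.exp (-2 * t)).continuousOn).mul
      (hderivc.mono hIccIoo)
  have hwmono : StrictMonoOn w (Set.Icc y₀ c) := by
    apply strictMonoOn_of_deriv_pos (convex_Icc y₀ c) hwc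
    intro t ht
    rw [interior_Icc] at ht
    have htI : t ∈ Set.Ioo (0:ℝ) L := hIccIoo (Set.Ioo_subset_Icc_self ht)
    rw [heq t htI]
    exact f_pos t (u t) htI (hsub (Set.Ioo_subset_Icc_self ht)).1
  have hw0 : w y₀ = 0 := by simp [hwdef, hderiv0]
  have humono : StrictMonoOn u (Set.Icc y₀ c) := by
    apply strictMonoOn_of_deriv_pos (convex_Icc y₀ c) (hu.continuousOn.mono hIccIcc)
    intro t ht
    rw [interior_Icc] at ht
    have hwt : 0 < w t := by
      rw [← hw0]
      exact hwmono (Set.left_mem_Icc.mpr hy₀c.le) (Set.Ioo_subset_Icc_self ht) ht.1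
    have : 0 < Real.exp (-2 * t) * deriv u t := hwt
    nlinarith [Real.exp_pos (-2 * t)]
  have : u y₀ < u c :=
    humono (Set.left_mem_Icc.mpr hy₀c.le) (Set.right_mem_Icc.mpr hy₀c.le) hy₀c
  have : u c ≤ u y₀ := hmax (Set.Ioo_subset_Icc_self hcIoo)
  linarith
end

section
/- (Lemma 2, minimum bound.) Fix real constants R₁, R₂ with 0 < R₁ < R₂, set L = log(R₂/R₁) and I = [0, L], fix α > 0, ω > 0, C > 0, μ ∈ ℝ and 0 < M₁ < M₂, and let f(y, u) = h(y, u) + g(y, u) as below. Suppose u* > 0 is such that f(y, v) < 0 for every y ∈ I and every v with 0 < v ≤ u*. If u : I → ℝ is a C² function with u(y) > 0 on I satisfying (e^{−2y}u′(y))′ = f(y, u(y)) for y ∈ (0, L), u(0) = M₁ and u(L) = M₂, then u(y) ≥ min(M₁, u*) for every y ∈ I; in particular there exists u_min > 0 with u(y) ≥ u_min on I. -/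
/-- Lemma 2, minimum bound: with the same setting as Lemma 1,
suppose `u* > 0` is such that `f(y, v) < 0` for every `y ∈ I` and every
`0 < v ≤ u*`.  If `u` is a positive C² classical solution of the boundary
value problem, then `u(y) ≥ min(M₁, u*)` on `I`; in particular there exists
`u_min > 0` with `u(y) ≥ u_min` on `I`. -/
theorem stmt_6 (R₁ R₂ : ℝ) (hR₁ : 0 < R₁) (hR : R₁ < R₂)
    (α ω C μ M₁ M₂ : ℝ) (hα : 0 < α) (hω : 0 < ω) (hC : 0 < C)
    (hM₁ : 0 < M₁) (hM : M₁ < M₂)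
    (L : ℝ) (hL : L = Real.log (R₂ / R₁))
    (f : ℝ → ℝ → ℝ)
    (hf : ∀ y u : ℝ, f y u =
      2 * Real.exp (-2 * y) *
        ((α - 1) * Real.exp (-4 * u) + (α / 2) * (Real.exp (2 * u) - 3 * Real.exp (-2 * u)) + 1)
      + ω ^ 2 * (Real.log (C * (Real.exp (2 * u) - 1) / R₁ ^ 2) - 2 * y + μ + 1) *
          Real.exp (2 * u))
    (ustar : ℝ) (hustar : 0 < ustar)
    (hneg : ∀ y ∈ Set.Icc (0 : ℝ) L, ∀ v : ℝ, 0 < v → v ≤ ustar → f y v < 0)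
    (u : ℝ → ℝ)
    (hu : ContDiffOn ℝ 2 u (Set.Icc 0 L))
    (hupos : ∀ y ∈ Set.Icc (0 : ℝ) L, 0 < u y)
    (heq : ∀ y ∈ Set.Ioo (0 : ℝ) L,
      deriv (fun t => Real.exp (-2 * t) * deriv u t) y = f y (u y))
    (hbc0 : u 0 = M₁) (hbcL : u L = M₂) :
    (∀ y ∈ Set.Icc (0 : ℝ) L, min M₁ ustar ≤ u y) ∧
    ∃ umin : ℝ, 0 < umin ∧ ∀ y ∈ Set.Icc (0 : ℝ) L, umin ≤ u y := by
  have hLpos : 0 < L := by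
    rw [hL]; exact Real.log_pos ((one_lt_div hR₁).mpr hR)
  have hcont : ContinuousOn u (Set.Icc 0 L) := hu.continuousOn
  have h0mem : (0 : ℝ) ∈ Set.Icc (0 : ℝ) L := ⟨le_refl _, hLpos.le⟩
  have hLmem : L ∈ Set.Icc (0 : ℝ) L := ⟨hLpos.le, le_refl _⟩
  obtain ⟨y₀, hy₀, hmin⟩ :=
    isCompact_Icc.exists_isMinOn ⟨0, h0mem⟩ hcont
  set m := min M₁ ustar with hm
  -- Key claim: m ≤ u y₀
  have hkey : m ≤ u y₀ := by
    by_contra hlt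
    push_neg at hlt
    -- y₀ is interior
    have hy₀0 : 0 < y₀ := by
      rcases lt_or_eq_of_le hy₀.1 with h | h
      · exact h
      · exfalso; rw [← h, hbc0] at hlt
        exact absurd hlt (not_lt.mpr (min_le_left _ _))
    have hy₀L : y₀ < L := by
      rcases lt_or_eq_of_le hy₀.2 with h | h
      · exact h
      · exfalso; rw [h, hbcL] at hlt
        exact absurd hlt (not_lt.mpr ((min_le_left _ _).trans hM.le))
    have hIccnhds : Set.Icc (0 : ℝ) L ∈ nhds y₀ := Icc_mem_nhds hy₀0 hy₀L
    have hcAt : ContinuousAt u y₀ := hcont.continuousAt hIccnhds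
    -- neighborhood where u < ustar
    have hSnhds : Set.Ioo (0 : ℝ) L ∩ u ⁻¹' Set.Iio ustar ∈ nhds y₀ := by
      apply Filter.inter_mem (Ioo_mem_nhds hy₀0 hy₀L)
      exact hcAt (Iio_mem_nhds (lt_of_lt_of_le hlt (min_le_right _ _)))
    obtain ⟨ε, hε, hball⟩ := Metric.mem_nhds_iff.mp hSnhds
    set δ := ε / 2 with hδ
    have hδpos : 0 < δ := half_pos hε
    have hsub : Set.Icc (y₀ - δ) (y₀ + δ) ⊆ Set.Ioo 0 L ∩ u ⁻¹' Set.Iio ustar := by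
      intro x hx
      apply hball
      rw [Metric.mem_ball, Real.dist_eq, abs_lt]
      constructor <;> [linarith [hx.1]; linarith [hx.2]]
    have hsubIoo : Set.Icc (y₀ - δ) (y₀ + δ) ⊆ Set.Ioo 0 L :=
      fun x hx => (hsub hx).1
    have hsubIcc : Set.Icc (y₀ - δ) (y₀ + δ) ⊆ Set.Icc 0 L :=
      fun x hx => ⟨(hsubIoo hx).1.le, (hsubIoo hx).2.le⟩
    -- w = e^{-2y} u'
    set w : ℝ → ℝ := fun t => Real.exp (-2 * t) * deriv u t with hw
    -- deriv u is continuous on Ioo 0 L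
    have hu' : ContDiffOn ℝ 2 u (Set.Ioo 0 L) := hu.mono Set.Ioo_subset_Icc_self
    have hderivCont : ContinuousOn (deriv u) (Set.Ioo 0 L) :=
      hu'.continuousOn_deriv_of_isOpen isOpen_Ioo (by norm_num)
    have hwcont : ContinuousOn w (Set.Ioo 0 L) := by
      apply ContinuousOn.mul _ hderivCont
      exact (Real.continuous_exp.comp (continuous_const.mul continuous_id)).continuousOn
    -- w is strictly decreasing on Icc (y₀-δ) (y₀+δ)
    have hanti : StrictAntiOn w (Set.Icc (y₀ - δ) (y₀ + δ)) := by
      apply strictAntiOn_of_deriv_neg (convex_Icc _ _) (hwcont.mono hsubIoo)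
      intro x hx
      rw [interior_Icc] at hx
      have hxIoo : x ∈ Set.Ioo (0 : ℝ) L := hsubIoo (Set.Ioo_subset_Icc_self hx)
      have hxS := hsub (Set.Ioo_subset_Icc_self hx)
      rw [heq x hxIoo]
      exact hneg x ⟨hxIoo.1.le, hxIoo.2.le⟩ (u x)
        (hupos x ⟨hxIoo.1.le, hxIoo.2.le⟩) (le_of_lt hxS.2)
    -- w y₀ = 0
    have hlocmin : IsLocalMin u y₀ :=
      hmin.isLocalMin hIccnhds
    have hderiv0 : deriv u y₀ = 0 := hlocmin.deriv_eq_zero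
    have hwy₀ : w y₀ = 0 := by simp [hw, hderiv0]
    -- for x in (y₀-δ, y₀): w x > 0, so deriv u x > 0
    have hderivpos : ∀ x ∈ Set.Ioo (y₀ - δ) y₀, 0 < deriv u x := by
      intro x hx
      have hx1 : x ∈ Set.Icc (y₀ - δ) (y₀ + δ) := ⟨hx.1.le, by linarith [hx.2]⟩
      have hy₀1 : y₀ ∈ Set.Icc (y₀ - δ) (y₀ + δ) := ⟨by linarith, by linarith⟩
      have := hanti hx1 hy₀1 hx.2
      rw [hwy₀] at this
      simp only [hw] at this
      have hexp : 0 < Real.exp (-2 * x) := Real.exp_pos _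
      nlinarith [this, hexp]
    -- u strictly mono on [y₀-δ, y₀]
    have hmono : StrictMonoOn u (Set.Icc (y₀ - δ) y₀) := by
      apply strictMonoOn_of_deriv_pos (convex_Icc _ _)
      · apply hcont.mono
        intro x hx
        exact hsubIcc ⟨hx.1, by linarith [hx.2, hδpos]⟩
      · intro x hx
        rw [interior_Icc] at hx
        exact hderivpos x hx
    have h1 : u (y₀ - δ) < u y₀ :=
      hmono ⟨le_refl _, by linarith⟩ ⟨by linarith, le_refl _⟩ (by linarith)
    have h2 : u y₀ ≤ u (y₀ - δ) :=
      hmin (hsubIcc ⟨le_refl _, by linarith⟩)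
    linarith
  have hmain : ∀ y ∈ Set.Icc (0 : ℝ) L, m ≤ u y :=
    fun y hy => hkey.trans (hmin hy)
  exact ⟨hmain, m, lt_min hM₁ hustar, hmain⟩
end

section
/- (Existence and uniqueness for the simplified equation with ω = 0.) Fix real constants R₁, R₂ with 0 < R₁ < R₂, set L = log(R₂/R₁) and I = [0, L], fix α > 0 and 0 < M₁ < M₂. Then there exists exactly one C² function u : I → ℝ with u(y) > 0 on I satisfying (e^{−2y}u′(y))′ = 2e^{−2y}((α − 1)e^{−4u(y)} + (α/2)(e^{2u(y)} − 3e^{−2u(y)}) + 1) for all y ∈ (0, L), together with the boundary conditions u(0) = M₁ and u(L) = M₂. -/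
/-- A classical solution of the simplified (`ω = 0`) boundary value problem
`(e^{−2y}u′(y))′ = 2e^{−2y}((α − 1)e^{−4u} + (α/2)(e^{2u} − 3e^{−2u}) + 1)`
on `(0, L)` with `u(0) = M₁`, `u(L) = M₂`: a C² function on `I = [0, L]`,
positive on `I`. -/
def IsSimplifiedSolution (α M₁ M₂ L : ℝ) (u : ℝ → ℝ) : Prop :=
  ContDiffOn ℝ 2 u (Set.Icc 0 L) ∧
  (∀ y ∈ Set.Icc (0 : ℝ) L, 0 < u y) ∧
  (∀ y ∈ Set.Ioo (0 : ℝ) L,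
    deriv (fun t => Real.exp (-2 * t) * deriv u t) y =
      2 * Real.exp (-2 * y) *
        ((α - 1) * Real.exp (-4 * u y) +
          (α / 2) * (Real.exp (2 * u y) - 3 * Real.exp (-2 * u y)) + 1)) ∧
  u 0 = M₁ ∧ u L = M₂

open Set Real Filter Topology
open scoped NNReal

noncomputable section ChromonicAux

/-- The nonlinearity. -/
def fRHS (α x : ℝ) : ℝ :=
  (α - 1) * Real.exp (-4 * x) + α / 2 * (Real.exp (2 * x) - 3 * Real.exp (-2 * x)) + 1

/-- Clamp to an interval. -/
def clampI (lo hi x : ℝ) : ℝ := max lo (min hi x)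

lemma clampI_mem {lo hi : ℝ} (h : lo ≤ hi) (x : ℝ) : clampI lo hi x ∈ Icc lo hi := by
  constructor
  · exact le_max_left _ _
  · exact max_le h (min_le_left _ _)

lemma clampI_of_mem {lo hi x : ℝ} (h1 : lo ≤ x) (h2 : x ≤ hi) : clampI lo hi x = x := by
  rw [clampI, min_eq_right h2, max_eq_right h1]

lemma clampI_of_le {lo hi x : ℝ} (h : x ≤ lo) (h' : lo ≤ hi) : clampI lo hi x = lo :=
  max_eq_left ((min_le_right hi x).trans h)

lemma clampI_of_ge {lo hi x : ℝ} (h : hi ≤ x) (h' : lo ≤ hi) : clampI lo hi x = hi := by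
  rw [clampI, min_eq_left h, max_eq_right h']

lemma clampI_eq_zero {P x : ℝ} (hP : 0 < P) (h : clampI (-P) P x = 0) : x = 0 := by
  rcases lt_trichotomy x 0 with hx | hx | hx
  · exfalso
    rcases le_total x (-P) with h1 | h1
    · rw [clampI_of_le h1 (by linarith)] at h; linarith
    · rw [clampI_of_mem h1 (by linarith)] at h; linarith
  · exact hx
  · exfalso
    rcases le_total P x with h1 | h1
    · rw [clampI_of_ge h1 (by linarith)] at h; linarith
    · rw [clampI_of_mem (by linarith) h1] at h; linarith

lemma clampI_lipschitz (lo hi : ℝ) : LipschitzWith 1 (clampI lo hi) := by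
  apply LipschitzWith.of_dist_le_mul
  intro x y
  rw [NNReal.coe_one, one_mul, Real.dist_eq, Real.dist_eq]
  calc |clampI lo hi x - clampI lo hi y| ≤ |min hi x - min hi y| := by
        rw [clampI, clampI, max_comm lo _, max_comm lo _]
        exact abs_max_sub_max_le_abs _ _ _
    _ ≤ max |hi - hi| |x - y| := abs_min_sub_min_le_max _ _ _ _
    _ ≤ |x - y| := by simp

lemma clampI_monotone (lo hi : ℝ) : Monotone (clampI lo hi) := fun x y h => by
  exact max_le_max le_rfl (min_le_min le_rfl h)

lemma clampI_abs_le {P x : ℝ} (hP : 0 ≤ P) : |clampI (-P) P x| ≤ P := by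
  rw [abs_le]
  exact ⟨(clampI_mem (by linarith) x).1, (clampI_mem (by linarith) x).2⟩

/-- derivative of fRHS -/
def fRHS' (α x : ℝ) : ℝ :=
  (-4) * (α - 1) * Real.exp (-4 * x) + α * Real.exp (2 * x) + 3 * α * Real.exp (-2 * x)

lemma hasDerivAt_fRHS (α x : ℝ) : HasDerivAt (fRHS α) (fRHS' α x) x := by
  have hid : ∀ c : ℝ, HasDerivAt (fun x : ℝ => c * x) c x := by
    intro c; simpa using (hasDerivAt_id x).const_mul c
  have h1 : HasDerivAt (fun x : ℝ => Real.exp (-4 * x)) (-4 * Real.exp (-4 * x)) x := by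
    simpa [mul_comm] using (hid (-4)).exp
  have h2 : HasDerivAt (fun x : ℝ => Real.exp (2 * x)) (2 * Real.exp (2 * x)) x := by
    simpa [mul_comm] using (hid 2).exp
  have h3 : HasDerivAt (fun x : ℝ => Real.exp (-2 * x)) (-2 * Real.exp (-2 * x)) x := by
    simpa [mul_comm] using (hid (-2)).exp
  have := (((h1.const_mul (α - 1)).add
    (((h2.sub (h3.const_mul 3)).const_mul (α / 2)))).add_const 1)
  exact this.congr_deriv (by unfold fRHS'; ring)

lemma fRHS_zero (α : ℝ) : fRHS α 0 = 0 := by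
  simp [fRHS]
  ring

lemma fRHS'_pos {α : ℝ} (hα : 0 < α) {x : ℝ} (hx : 0 ≤ x) : 0 < fRHS' α x := by
  have e1 : (1:ℝ) ≤ Real.exp (2 * x) := by
    rw [← Real.exp_zero]; exact Real.exp_le_exp.2 (by linarith)
  have e0 : (0:ℝ) < Real.exp (-4 * x) := Real.exp_pos _
  have e2 : Real.exp (-2 * x) * Real.exp (-2*x) = Real.exp (-4 * x) := by
    rw [← Real.exp_add]; ring_nf
  have e3 : Real.exp (-4 * x) ≤ Real.exp (-2 * x) := Real.exp_le_exp.2 (by linarith)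
  have e4 : (0:ℝ) < Real.exp (-2*x) := Real.exp_pos _
  -- fRHS' α x = e^{-4x} * (-4(α-1) + α e^{6x} + 3α e^{2x}) ≥ e^{-4x} * 4 > 0
  have m1 : Real.exp (-4*x) * Real.exp (6*x) = Real.exp (2*x) := by
    rw [← Real.exp_add]; ring_nf
  have m2 : Real.exp (-4*x) * Real.exp (2*x) = Real.exp (-2*x) := by
    rw [← Real.exp_add]; ring_nf
  have key : fRHS' α x = Real.exp (-4*x) * ((-4)*(α-1) + α * Real.exp (6*x) + 3*α*Real.exp (2*x)) := by
    unfold fRHS'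
    nlinarith [m1, m2]
  rw [key]
  have e5 : (1:ℝ) ≤ Real.exp (6 * x) := by
    rw [← Real.exp_zero]; exact Real.exp_le_exp.2 (by linarith)
  have h4 : (4:ℝ) ≤ (-4)*(α-1) + α * Real.exp (6*x) + 3*α*Real.exp (2*x) := by
    nlinarith
  nlinarith [e0]

section Fprops

lemma fRHS_strictMonoOn {α : ℝ} (hα : 0 < α) : StrictMonoOn (fRHS α) (Ici 0) := by
  apply strictMonoOn_of_deriv_pos (convex_Ici 0)
  · exact fun x _ => (hasDerivAt_fRHS α x).continuousAt.continuousWithinAt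
  · intro x hx
    rw [interior_Ici] at hx
    rw [(hasDerivAt_fRHS α x).deriv]
    exact fRHS'_pos hα (le_of_lt hx)

lemma fRHS_pos {α : ℝ} (hα : 0 < α) {x : ℝ} (hx : 0 < x) : 0 < fRHS α x := by
  have := fRHS_strictMonoOn hα (self_mem_Ici) (le_of_lt hx : (0:ℝ) ≤ x) hx
  rwa [fRHS_zero] at this

lemma fRHS_nonneg {α : ℝ} (hα : 0 < α) {x : ℝ} (hx : 0 ≤ x) : 0 ≤ fRHS α x := by
  rcases eq_or_lt_of_le hx with h | h
  · rw [← h, fRHS_zero]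
  · exact le_of_lt (fRHS_pos hα h)

lemma fRHS_monotoneOn {α : ℝ} (hα : 0 < α) : MonotoneOn (fRHS α) (Ici 0) :=
  (fRHS_strictMonoOn hα).monotoneOn

/-- Lipschitz constant for fRHS on `[0, M₂]`. -/
def KfC (α M₂ : ℝ) : ℝ := 4 * |α - 1| + α * Real.exp (2 * M₂) + 3 * α

lemma KfC_nonneg {α M₂ : ℝ} (hα : 0 < α) : 0 ≤ KfC α M₂ := by
  have := Real.exp_pos (2 * M₂)
  have := abs_nonneg (α - 1)
  unfold KfC; nlinarith

lemma abs_fRHS'_le {α M₂ : ℝ} (hα : 0 < α) {x : ℝ} (hx : x ∈ Icc 0 M₂) :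
    |fRHS' α x| ≤ KfC α M₂ := by
  obtain ⟨hx0, hx2⟩ := hx
  have e1 : Real.exp (-4 * x) ≤ 1 := Real.exp_le_one_iff.2 (by linarith)
  have e2 : Real.exp (2 * x) ≤ Real.exp (2 * M₂) := Real.exp_le_exp.2 (by linarith)
  have e3 : Real.exp (-2 * x) ≤ 1 := Real.exp_le_one_iff.2 (by linarith)
  have p1 : (0:ℝ) < Real.exp (-4 * x) := Real.exp_pos _
  have p2 : (0:ℝ) < Real.exp (2 * x) := Real.exp_pos _
  have p3 : (0:ℝ) < Real.exp (-2 * x) := Real.exp_pos _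
  have habs : |fRHS' α x| ≤ 4 * |α - 1| * Real.exp (-4*x) + α * Real.exp (2*x)
      + 3 * α * Real.exp (-2*x) := by
    unfold fRHS'
    calc |(-4) * (α - 1) * Real.exp (-4 * x) + α * Real.exp (2 * x) + 3 * α * Real.exp (-2 * x)|
        ≤ |(-4) * (α - 1) * Real.exp (-4 * x) + α * Real.exp (2 * x)| + |3 * α * Real.exp (-2 * x)| :=
          abs_add_le _ _
      _ ≤ |(-4) * (α - 1) * Real.exp (-4 * x)| + |α * Real.exp (2 * x)| + |3 * α * Real.exp (-2 * x)| := by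
          have := abs_add_le ((-4) * (α - 1) * Real.exp (-4 * x)) (α * Real.exp (2 * x))
          linarith
      _ = 4 * |α - 1| * Real.exp (-4*x) + α * Real.exp (2*x) + 3 * α * Real.exp (-2*x) := by
          rw [abs_mul, abs_mul, abs_mul, abs_mul]
          rw [abs_of_pos p1, abs_of_pos p2, abs_of_pos p3,
            abs_of_pos hα, abs_mul]
          norm_num [abs_of_nonneg hα.le]
  have h1 : 4 * |α - 1| * Real.exp (-4*x) ≤ 4 * |α - 1| := by
    nlinarith [abs_nonneg (α - 1)]
  have h2 : α * Real.exp (2*x) ≤ α * Real.exp (2 * M₂) := by nlinarith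
  have h3 : 3 * α * Real.exp (-2*x) ≤ 3 * α := by nlinarith
  unfold KfC; linarith

lemma fRHS_lipschitzOnWith {α M₂ : ℝ} (hα : 0 < α) (hM₂ : 0 ≤ M₂) :
    LipschitzOnWith (Real.toNNReal (KfC α M₂)) (fRHS α) (Icc 0 M₂) := by
  apply LipschitzOnWith.of_dist_le_mul
  intro x hx y hy
  rw [Real.dist_eq, Real.dist_eq, Real.coe_toNNReal _ (KfC_nonneg hα)]
  rcases le_total x y with h | h
  · rcases eq_or_lt_of_le h with rfl | hlt
    · simp
    · obtain ⟨c, hc, hceq⟩ := exists_hasDerivAt_eq_slope (fRHS α) (fRHS' α) hlt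
        (fun t _ => (hasDerivAt_fRHS α t).continuousAt.continuousWithinAt)
        (fun t _ => hasDerivAt_fRHS α t)
      have hcmem : c ∈ Icc 0 M₂ := ⟨le_trans hx.1 (le_of_lt hc.1), le_trans (le_of_lt hc.2) hy.2⟩
      have := abs_fRHS'_le hα (M₂ := M₂) hcmem
      rw [hceq] at this
      rw [abs_div] at this
      have hxy : 0 < |y - x| := by rw [abs_pos]; linarith
      rw [div_le_iff₀ hxy] at this
      rw [abs_sub_comm x y, abs_sub_comm (fRHS α x) (fRHS α y)]
      calc |fRHS α y - fRHS α x| ≤ KfC α M₂ * |y - x| := this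
        _ = KfC α M₂ * |y - x| := rfl
  · rcases eq_or_lt_of_le h with rfl | hlt
    · simp
    · obtain ⟨c, hc, hceq⟩ := exists_hasDerivAt_eq_slope (fRHS α) (fRHS' α) hlt
        (fun t _ => (hasDerivAt_fRHS α t).continuousAt.continuousWithinAt)
        (fun t _ => hasDerivAt_fRHS α t)
      have hcmem : c ∈ Icc 0 M₂ := ⟨le_trans hy.1 (le_of_lt hc.1), le_trans (le_of_lt hc.2) hx.2⟩
      have := abs_fRHS'_le hα (M₂ := M₂) hcmem
      rw [hceq, abs_div] at this
      have hxy : 0 < |x - y| := by rw [abs_pos]; linarith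
      rw [div_le_iff₀ hxy] at this
      exact this

end Fprops

section Gfun

variable {α M₁ M₂ L : ℝ}

/-- truncated nonlinearity -/
def gfun (α M₂ x : ℝ) : ℝ := fRHS α (clampI 0 M₂ x)

lemma gfun_nonneg (hα : 0 < α) (hM₂ : 0 ≤ M₂) (x : ℝ) : 0 ≤ gfun α M₂ x :=
  fRHS_nonneg hα (clampI_mem hM₂ x).1

lemma gfun_le (hα : 0 < α) (hM₂ : 0 ≤ M₂) (x : ℝ) : gfun α M₂ x ≤ fRHS α M₂ :=
  fRHS_monotoneOn hα (clampI_mem hM₂ x).1 (le_refl M₂ |> fun _ => hM₂) (clampI_mem hM₂ x).2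

lemma gfun_eq (hM₂ : 0 ≤ M₂) {x : ℝ} (h1 : 0 ≤ x) (h2 : x ≤ M₂) : gfun α M₂ x = fRHS α x := by
  rw [gfun, clampI_of_mem h1 h2]

lemma gfun_eq_zero (hM₂ : 0 ≤ M₂) {x : ℝ} (h : x ≤ 0) : gfun α M₂ x = 0 := by
  rw [gfun, clampI_of_le h hM₂, fRHS_zero]

lemma gfun_mono (hα : 0 < α) (hM₂ : 0 ≤ M₂) : Monotone (gfun α M₂) := by
  intro x y h
  exact fRHS_monotoneOn hα (clampI_mem hM₂ x).1 (clampI_mem hM₂ y).1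
    (clampI_monotone 0 M₂ h)

lemma gfun_pos (hα : 0 < α) (hM₂ : 0 < M₂) {x : ℝ} (hx : 0 < x) : 0 < gfun α M₂ x := by
  rw [gfun]
  apply fRHS_pos hα
  rcases le_total M₂ x with h | h
  · rw [clampI_of_ge h (le_of_lt hM₂)]; exact hM₂
  · rw [clampI_of_mem (le_of_lt hx) h]; exact hx

lemma gfun_lipschitz (hα : 0 < α) (hM₂ : 0 ≤ M₂) :
    LipschitzWith (Real.toNNReal (KfC α M₂)) (gfun α M₂) := by
  have h1 : LipschitzOnWith (Real.toNNReal (KfC α M₂)) (fRHS α) (Icc 0 M₂) :=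
    fRHS_lipschitzOnWith hα hM₂
  apply LipschitzWith.of_dist_le_mul
  intro x y
  have hc := (clampI_lipschitz 0 M₂).dist_le_mul x y
  rw [NNReal.coe_one, one_mul] at hc
  calc dist (gfun α M₂ x) (gfun α M₂ y)
      ≤ (Real.toNNReal (KfC α M₂) : ℝ) * dist (clampI 0 M₂ x) (clampI 0 M₂ y) :=
        h1.dist_le_mul _ (clampI_mem hM₂ x) _ (clampI_mem hM₂ y)
    _ ≤ (Real.toNNReal (KfC α M₂) : ℝ) * dist x y := by
        apply mul_le_mul_of_nonneg_left hc (NNReal.coe_nonneg _)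

end Gfun

end ChromonicAux

section Helpers

lemma mono_aux {u U : ℝ → ℝ} {a b : ℝ}
    (hd : ∀ t ∈ Icc a b, HasDerivWithinAt u (U t) (Icc a b) t)
    (hU : ∀ t ∈ Ioo a b, 0 ≤ U t) : MonotoneOn u (Icc a b) := by
  apply monotoneOn_of_deriv_nonneg (convex_Icc a b)
    (fun t ht => (hd t ht).continuousWithinAt)
  · intro t ht
    rw [interior_Icc] at ht
    exact ((hd t (Ioo_subset_Icc_self ht)).hasDerivAt
      (Icc_mem_nhds ht.1 ht.2)).differentiableAt.differentiableWithinAt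
  · intro t ht
    rw [interior_Icc] at ht
    rw [((hd t (Ioo_subset_Icc_self ht)).hasDerivAt (Icc_mem_nhds ht.1 ht.2)).deriv]
    exact hU t ht

lemma growth_ge {u U : ℝ → ℝ} {a b c : ℝ} (hab : a ≤ b)
    (hd : ∀ t ∈ Icc a b, HasDerivWithinAt u (U t) (Icc a b) t)
    (hU : ∀ t ∈ Ioo a b, c ≤ U t) : c * (b - a) ≤ u b - u a := by
  have hd' : ∀ t ∈ Icc a b, HasDerivWithinAt (fun t => u t - c * t) (U t - c) (Icc a b) t := by
    intro t ht
    exact ((hd t ht).sub ((hasDerivWithinAt_id t _).const_mul c)).congr_deriv (by ring)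
  have := mono_aux hd' (fun t ht => by linarith [hU t ht])
    (left_mem_Icc.2 hab) (right_mem_Icc.2 hab) hab
  simp only at this
  linarith

lemma growth_le {u U : ℝ → ℝ} {a b c : ℝ} (hab : a ≤ b)
    (hd : ∀ t ∈ Icc a b, HasDerivWithinAt u (U t) (Icc a b) t)
    (hU : ∀ t ∈ Ioo a b, U t ≤ c) : u b - u a ≤ c * (b - a) := by
  have hd' : ∀ t ∈ Icc a b, HasDerivWithinAt (fun t => c * t - u t) (c - U t) (Icc a b) t := by
    intro t ht
    exact (((hasDerivWithinAt_id t _).const_mul c).sub (hd t ht)).congr_deriv (by ring)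
  have := mono_aux hd' (fun t ht => by linarith [hU t ht])
    (left_mem_Icc.2 hab) (right_mem_Icc.2 hab) hab
  simp only at this
  linarith

lemma eq_affine_aux {u U : ℝ → ℝ} {a b c : ℝ} (hab : a ≤ b)
    (hd : ∀ t ∈ Icc a b, HasDerivWithinAt u (U t) (Icc a b) t)
    (hU : ∀ t ∈ Ioo a b, U t = c) : u b = u a + c * (b - a) := by
  have h1 := growth_ge hab hd (fun t ht => (hU t ht).ge)
  have h2 := growth_le hab hd (fun t ht => (hU t ht).le)
  linarith

/-- Forward invariance of `{φ ≥ c}` under strict inflow at the boundary. -/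
lemma invariant_ge {φ Φ : ℝ → ℝ} {a b c : ℝ}
    (hd : ∀ t ∈ Icc a b, HasDerivWithinAt φ (Φ t) (Icc a b) t)
    (h0 : c ≤ φ a)
    (hin : ∀ t ∈ Ico a b, φ t = c → 0 < Φ t) :
    ∀ t ∈ Icc a b, c ≤ φ t := by
  by_contra hcon
  push_neg at hcon
  obtain ⟨t₁, ht₁, hlt⟩ := hcon
  have hcont : ContinuousOn φ (Icc a b) := fun t ht => (hd t ht).continuousWithinAt
  have hat₁ : a < t₁ := by
    rcases eq_or_lt_of_le ht₁.1 with rfl | h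
    · linarith
    · exact h
  set S : Set ℝ := {t ∈ Icc a t₁ | c ≤ φ t} with hS
  have hSne : S.Nonempty := ⟨a, ⟨left_mem_Icc.2 hat₁.le, h0⟩⟩
  have hSclosed : IsClosed S := by
    have : S = Icc a t₁ ∩ φ ⁻¹' (Ici c) := by
      ext t; simp [hS, and_comm]
    rw [this]
    exact (hcont.mono (Icc_subset_Icc le_rfl ht₁.2)).preimage_isClosed_of_isClosed
      isClosed_Icc isClosed_Ici
  have hScomp : IsCompact S := (isCompact_Icc (a := a) (b := t₁)).of_isClosed_subset hSclosed
    (fun t ht => ht.1)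
  set τ := sSup S with hτdef
  have hτS : τ ∈ S := hScomp.sSup_mem hSne
  have hτIcc : τ ∈ Icc a t₁ := hτS.1
  have hφτ : c ≤ φ τ := hτS.2
  have hτlt : τ < t₁ := by
    rcases eq_or_lt_of_le hτIcc.2 with h | h
    · exfalso; rw [h] at hφτ; linarith
    · exact h
  have hτmem : τ ∈ Icc a b := ⟨hτIcc.1, le_trans hτIcc.2 ht₁.2⟩
  have hbad : ∀ t ∈ Ioc τ t₁, φ t < c := by
    intro t ht
    by_contra hge
    push_neg at hge
    have : t ∈ S := ⟨⟨le_trans hτIcc.1 ht.1.le, ht.2⟩, hge⟩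
    have : t ≤ τ := le_csSup hScomp.bddAbove this
    linarith [ht.1]
  -- the filter of approach from the right within (τ, t₁]
  have hsub : Ioc τ t₁ ⊆ Icc a b := fun t ht =>
    ⟨le_trans hτIcc.1 ht.1.le, le_trans ht.2 ht₁.2⟩
  have hNB : (𝓝[Ioc τ t₁] τ).NeBot := by
    rw [← mem_closure_iff_nhdsWithin_neBot, closure_Ioc (ne_of_lt hτlt)]
    exact left_mem_Icc.2 hτlt.le
  have hgood : ∃ t ∈ Ioc τ t₁, c ≤ φ t := by
    rcases eq_or_lt_of_le hφτ with heq | hlt2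
    · -- boundary case: use strict inflow
      have hΦ : 0 < Φ τ := hin τ ⟨hτIcc.1, lt_of_lt_of_le hτlt ht₁.2⟩ heq.symm
      have hslope : Tendsto (slope φ τ) (𝓝[Icc a b \ {τ}] τ) (𝓝 (Φ τ)) :=
        (hasDerivWithinAt_iff_tendsto_slope.1 (hd τ hτmem))
      have hle : 𝓝[Ioc τ t₁] τ ≤ 𝓝[Icc a b \ {τ}] τ :=
        nhdsWithin_mono τ (fun t ht => ⟨hsub ht, by simp [ne_of_gt ht.1]⟩)
      have hev : ∀ᶠ t in 𝓝[Ioc τ t₁] τ, 0 < slope φ τ t :=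
        (hslope.mono_left hle).eventually (eventually_gt_nhds hΦ)
      have hmem : ∀ᶠ t in 𝓝[Ioc τ t₁] τ, t ∈ Ioc τ t₁ := self_mem_nhdsWithin
      obtain ⟨t, hts, htm⟩ := (hev.and hmem).exists
      refine ⟨t, htm, ?_⟩
      have h1 : 0 < t - τ := by linarith [htm.1]
      rw [slope_def_field] at hts
      have := mul_pos hts h1
      rw [div_mul_cancel₀] at this
      · rw [heq]; linarith
      · exact ne_of_gt h1
    · -- interior case: use continuity
      have hev : ∀ᶠ t in 𝓝[Icc a b] τ, c < φ t :=
        (hcont τ hτmem).eventually (eventually_gt_nhds hlt2)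
      have hle : 𝓝[Ioc τ t₁] τ ≤ 𝓝[Icc a b] τ := nhdsWithin_mono τ hsub
      have hmem : ∀ᶠ t in 𝓝[Ioc τ t₁] τ, t ∈ Ioc τ t₁ := self_mem_nhdsWithin
      obtain ⟨t, hts, htm⟩ := ((hev.filter_mono hle).and hmem).exists
      exact ⟨t, htm, hts.le⟩
  obtain ⟨t, htm, htc⟩ := hgood
  exact absurd htc (not_le.2 (hbad t htm))

/-- Forward invariance of `{φ ≤ c}` under strict outflow at the boundary. -/
lemma invariant_le {φ Φ : ℝ → ℝ} {a b c : ℝ}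
    (hd : ∀ t ∈ Icc a b, HasDerivWithinAt φ (Φ t) (Icc a b) t)
    (h0 : φ a ≤ c)
    (hin : ∀ t ∈ Ico a b, φ t = c → Φ t < 0) :
    ∀ t ∈ Icc a b, φ t ≤ c := by
  have := invariant_ge (φ := fun t => -φ t) (Φ := fun t => -Φ t) (c := -c)
    (fun t ht => (hd t ht).neg) (by simpa using h0)
    (fun t ht h => by
      have hφ : φ t = c := by
        have : -φ t = -c := h
        linarith
      simpa using hin t ht hφ)
  intro t ht
  have h2 := this t ht
  simp only [neg_le_neg_iff] at h2
  linarith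

end Helpers

section Field

variable (α M₁ M₂ L : ℝ)

/-- a priori bound for the nonlinearity -/
noncomputable def GB : ℝ := fRHS α M₂

/-- truncation level for the slope -/
noncomputable def PB : ℝ :=
  Real.exp (2 * L) * ((M₂ - M₁) / L + 2 * GB α M₂ * L) + GB α M₂ + M₂ / L + (M₂ - M₁) / L + 1

/-- the truncated vector field for the first-order system -/
noncomputable def vf : ℝ → ℝ × ℝ → ℝ × ℝ := fun _ x =>
  (clampI (-(PB α M₁ M₂ L)) (PB α M₁ M₂ L) x.2,
   2 * clampI (-(PB α M₁ M₂ L)) (PB α M₁ M₂ L) x.2 + 2 * gfun α M₂ x.1)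

variable {α M₁ M₂ L}

lemma GB_pos (hα : 0 < α) (hM₂ : 0 < M₂) : 0 < GB α M₂ := fRHS_pos hα hM₂

lemma PB_pos (hα : 0 < α) (hM₁ : 0 < M₁) (hM : M₁ < M₂) (hL : 0 < L) : 0 < PB α M₁ M₂ L := by
  have h1 := GB_pos hα (hM₁.trans hM)
  have h2 : 0 < Real.exp (2 * L) := Real.exp_pos _
  have h3 : 0 < (M₂ - M₁) / L := div_pos (by linarith) hL
  have h4 : 0 < M₂ / L := div_pos (by linarith) hL
  have h5 : 0 < Real.exp (2 * L) * ((M₂ - M₁) / L + 2 * GB α M₂ * L) := by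
    apply mul_pos h2; nlinarith
  unfold PB
  linarith

lemma PB_gt_GB (hα : 0 < α) (hM₁ : 0 < M₁) (hM : M₁ < M₂) (hL : 0 < L) :
    GB α M₂ < PB α M₁ M₂ L := by
  have h1 := GB_pos hα (hM₁.trans hM)
  have h2 : 0 < Real.exp (2 * L) := Real.exp_pos _
  have h3 : 0 < (M₂ - M₁) / L := div_pos (by linarith) hL
  have h4 : 0 < M₂ / L := div_pos (by linarith) hL
  have h5 : 0 < Real.exp (2 * L) * ((M₂ - M₁) / L + 2 * GB α M₂ * L) := by
    apply mul_pos h2; nlinarith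
  unfold PB
  linarith

lemma PB_gt_mu (hα : 0 < α) (hM₁ : 0 < M₁) (hM : M₁ < M₂) (hL : 0 < L) :
    (M₂ - M₁) / L < PB α M₁ M₂ L := by
  have h1 := GB_pos hα (hM₁.trans hM)
  have h2 : 0 < Real.exp (2 * L) := Real.exp_pos _
  have h3 : 0 < (M₂ - M₁) / L := div_pos (by linarith) hL
  have h4 : 0 < M₂ / L := div_pos (by linarith) hL
  have h5 : 0 < Real.exp (2 * L) * ((M₂ - M₁) / L + 2 * GB α M₂ * L) := by
    apply mul_pos (Real.exp_pos _); nlinarith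
  unfold PB
  linarith

lemma PB_mul_L (hα : 0 < α) (hM₁ : 0 < M₁) (hM : M₁ < M₂) (hL : 0 < L) :
    M₂ - M₁ < PB α M₁ M₂ L * L := by
  have := PB_gt_mu hα hM₁ hM hL
  have h3 : (M₂ - M₁) / L * L = M₂ - M₁ := div_mul_cancel₀ _ (ne_of_gt hL)
  nlinarith

lemma PB_gt_exp (hα : 0 < α) (hM₁ : 0 < M₁) (hM : M₁ < M₂) (hL : 0 < L) :
    Real.exp (2 * L) * ((M₂ - M₁) / L + 2 * GB α M₂ * L) < PB α M₁ M₂ L := by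
  have h1 := GB_pos hα (hM₁.trans hM)
  have h3 : 0 < (M₂ - M₁) / L := div_pos (by linarith) hL
  have h4 : 0 < M₂ / L := div_pos (by linarith) hL
  unfold PB
  nlinarith

/-- Lipschitz constant of the truncated vector field. -/
noncomputable def KV (α M₂ : ℝ) : ℝ≥0 := Real.toNNReal (3 + 2 * KfC α M₂)

lemma vf_lipschitz (hα : 0 < α) (hM₂ : 0 ≤ M₂) (t : ℝ) :
    LipschitzWith (KV α M₂) (vf α M₁ M₂ L t) := by
  apply LipschitzWith.of_dist_le_mul
  intro x y
  set P := PB α M₁ M₂ L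
  have hcl := (clampI_lipschitz (-P) P).dist_le_mul x.2 y.2
  rw [NNReal.coe_one, one_mul] at hcl
  have hg := (gfun_lipschitz hα hM₂).dist_le_mul x.1 y.1
  have hd2 : dist x.2 y.2 ≤ dist x y := le_max_right _ _
  have hd1 : dist x.1 y.1 ≤ dist x y := le_max_left _ _
  have hKf : (0:ℝ) ≤ KfC α M₂ := KfC_nonneg hα
  have hcoe : ((Real.toNNReal (KfC α M₂)) : ℝ) = KfC α M₂ := Real.coe_toNNReal _ hKf
  rw [hcoe] at hg
  have hKV : ((KV α M₂ : ℝ≥0) : ℝ) = 3 + 2 * KfC α M₂ := by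
    rw [KV, Real.coe_toNNReal _ (by linarith)]
  rw [Prod.dist_eq, hKV]
  apply max_le
  · calc dist (clampI (-P) P x.2) (clampI (-P) P y.2) ≤ dist x y := hcl.trans hd2
      _ ≤ (3 + 2 * KfC α M₂) * dist x y := by nlinarith [dist_nonneg (x := x) (y := y)]
  · have hdist : dist (2 * clampI (-P) P x.2 + 2 * gfun α M₂ x.1)
        (2 * clampI (-P) P y.2 + 2 * gfun α M₂ y.1)
        ≤ 2 * dist (clampI (-P) P x.2) (clampI (-P) P y.2) + 2 * dist (gfun α M₂ x.1) (gfun α M₂ y.1) := by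
      rw [Real.dist_eq, Real.dist_eq, Real.dist_eq]
      have := abs_add_le (2 * clampI (-P) P x.2 - 2 * clampI (-P) P y.2)
        (2 * gfun α M₂ x.1 - 2 * gfun α M₂ y.1)
      have e1 : |2 * clampI (-P) P x.2 - 2 * clampI (-P) P y.2|
          = 2 * |clampI (-P) P x.2 - clampI (-P) P y.2| := by
        rw [show 2 * clampI (-P) P x.2 - 2 * clampI (-P) P y.2
          = 2 * (clampI (-P) P x.2 - clampI (-P) P y.2) by ring, abs_mul, abs_two]
      have e2 : |2 * gfun α M₂ x.1 - 2 * gfun α M₂ y.1| = 2 * |gfun α M₂ x.1 - gfun α M₂ y.1| := by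
        rw [show 2 * gfun α M₂ x.1 - 2 * gfun α M₂ y.1
          = 2 * (gfun α M₂ x.1 - gfun α M₂ y.1) by ring, abs_mul, abs_two]
      calc |2 * clampI (-P) P x.2 + 2 * gfun α M₂ x.1 - (2 * clampI (-P) P y.2 + 2 * gfun α M₂ y.1)|
          = |(2 * clampI (-P) P x.2 - 2 * clampI (-P) P y.2) + (2 * gfun α M₂ x.1 - 2 * gfun α M₂ y.1)| := by
            ring_nf
        _ ≤ |2 * clampI (-P) P x.2 - 2 * clampI (-P) P y.2| + |2 * gfun α M₂ x.1 - 2 * gfun α M₂ y.1| :=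
            abs_add_le _ _
        _ = 2 * |clampI (-P) P x.2 - clampI (-P) P y.2| + 2 * |gfun α M₂ x.1 - gfun α M₂ y.1| := by
            rw [e1, e2]
    calc dist (2 * clampI (-P) P x.2 + 2 * gfun α M₂ x.1) (2 * clampI (-P) P y.2 + 2 * gfun α M₂ y.1)
        ≤ 2 * dist (clampI (-P) P x.2) (clampI (-P) P y.2)
          + 2 * dist (gfun α M₂ x.1) (gfun α M₂ y.1) := hdist
      _ ≤ 2 * dist x y + 2 * (KfC α M₂ * dist x y) := by
          have h1 := hcl.trans hd2
          have h2 := hg.trans (mul_le_mul_of_nonneg_left hd1 hKf)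
          have := dist_nonneg (x := clampI (-P) P x.2) (y := clampI (-P) P y.2)
          linarith
      _ ≤ (3 + 2 * KfC α M₂) * dist x y := by nlinarith [dist_nonneg (x := x) (y := y)]

lemma vf_bound (hα : 0 < α) (hM₁ : 0 < M₁) (hM : M₁ < M₂) (hL : 0 < L) (t : ℝ) (x : ℝ × ℝ) :
    ‖vf α M₁ M₂ L t x‖ ≤ 2 * PB α M₁ M₂ L + 2 * GB α M₂ := by
  set P := PB α M₁ M₂ L
  have hP := PB_pos hα hM₁ hM hL
  have hG := GB_pos hα (hM₁.trans hM)
  have h1 : |clampI (-P) P x.2| ≤ P := clampI_abs_le hP.le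
  have hGBeq : GB α M₂ = fRHS α M₂ := rfl
  have h2 : |2 * clampI (-P) P x.2 + 2 * gfun α M₂ x.1| ≤ 2 * P + 2 * GB α M₂ := by
    have hg1 := gfun_nonneg hα (by linarith : (0:ℝ) ≤ M₂) x.1
    have hg2 := gfun_le hα (by linarith : (0:ℝ) ≤ M₂) x.1
    rw [← hGBeq] at hg2
    have hab := abs_le.1 h1
    rw [abs_le]
    constructor
    · linarith [hab.1, hab.2]
    · linarith [hab.1, hab.2]
  rw [Prod.norm_def]
  simp only [vf, Real.norm_eq_abs]
  apply max_le
  · linarith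
  · exact h2

/-- Existence of a solution to the truncated system with initial slope `s`. -/
lemma exists_sol (hα : 0 < α) (hM₁ : 0 < M₁) (hM : M₁ < M₂) (hL : 0 < L) (s : ℝ) :
    ∃ w : ℝ → ℝ × ℝ, w 0 = (M₁, s) ∧
      ∀ t ∈ Icc 0 L, HasDerivWithinAt w (vf α M₁ M₂ L t (w t)) (Icc 0 L) t := by
  set C : ℝ := 2 * PB α M₁ M₂ L + 2 * GB α M₂
  have hC : 0 ≤ C := by
    have := PB_pos hα hM₁ hM hL
    have := GB_pos hα (hM₁.trans hM)
    positivity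
  have hpl : IsPicardLindelof (vf α M₁ M₂ L) (tmin := 0) (tmax := L) ⟨0, le_refl 0, hL.le⟩ (M₁, s)
      ⟨C * L, by positivity⟩ 0 ⟨C, hC⟩ (KV α M₂) := by
    constructor
    · exact fun t _ => (vf_lipschitz hα (by linarith : (0:ℝ) ≤ M₂) t).lipschitzOnWith
    · exact fun x _ => continuousOn_const
    · exact fun t _ x _ => vf_bound hα hM₁ hM hL t x
    · simp only [NNReal.coe_mk, NNReal.coe_zero, sub_zero, sub_self]
      rw [max_eq_left hL.le]
      exact le_refl _
  obtain ⟨w, hw0, hwd⟩ := IsPicardLindelof.exists_eq_forall_mem_Icc_hasDerivWithinAt₀ hpl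
  exact ⟨w, hw0, hwd⟩

end Field

section ClampExtra

lemma clampI_zero {P : ℝ} (hP : 0 < P) : clampI (-P) P 0 = 0 :=
  clampI_of_mem (by linarith) hP.le

lemma clampI_nonneg {P x : ℝ} (hP : 0 < P) (hx : 0 ≤ x) : 0 ≤ clampI (-P) P x := by
  have := clampI_monotone (-P) P hx
  rwa [clampI_zero hP] at this

lemma clampI_ge_min {P x : ℝ} (hP : 0 < P) (hx : 0 ≤ x) : min P x ≤ clampI (-P) P x := by
  rcases le_total x P with h | h
  · rw [clampI_of_mem (by linarith) h, min_comm]; exact min_le_left _ _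
  · rw [clampI_of_ge h (by linarith)]; exact min_le_left _ _

lemma clampI_eq_of_abs_lt {P x c : ℝ} (hc : |c| < P) (h : clampI (-P) P x = c) : x = c := by
  have hc1 := abs_lt.1 hc
  rcases lt_trichotomy x (-P) with h1 | h1 | h1
  · rw [clampI_of_le h1.le (by linarith)] at h; linarith
  · rw [← h1] at h; rw [clampI_of_le le_rfl (by linarith)] at h; linarith
  · rcases le_total P x with h2 | h2
    · rw [clampI_of_ge h2 (by linarith)] at h; linarith
    · rwa [clampI_of_mem h1.le h2] at h

end ClampExtra

section Traj

variable {P G L : ℝ} {g : ℝ → ℝ} {u p : ℝ → ℝ}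

/-- Once `u ≥ a > 0` with `p ≥ 0`, both properties persist. -/
lemma forward_inc (hP : 0 < P) (hL : 0 < L)
    (hgmono : Monotone g) (hgpos : ∀ x, 0 < x → 0 < g x)
    (hu : ∀ t ∈ Icc 0 L, HasDerivWithinAt u (clampI (-P) P (p t)) (Icc 0 L) t)
    (hp : ∀ t ∈ Icc 0 L, HasDerivWithinAt p (2 * clampI (-P) P (p t) + 2 * g (u t)) (Icc 0 L) t)
    {y₁ a : ℝ} (hy₁ : y₁ ∈ Icc 0 L) (ha : 0 < a) (hua : a ≤ u y₁) (hpa : 0 ≤ p y₁) :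
    ∀ t ∈ Icc y₁ L, 0 ≤ p t ∧ a ≤ u t := by
  have hucont : ContinuousOn u (Icc 0 L) := fun t ht => (hu t ht).continuousWithinAt
  have hpcont : ContinuousOn p (Icc 0 L) := fun t ht => (hp t ht).continuousWithinAt
  by_contra hcon
  push_neg at hcon
  obtain ⟨t₁, ht₁, hbad1⟩ := hcon
  have ht₁m : t₁ ∈ Icc 0 L := ⟨le_trans hy₁.1 ht₁.1, ht₁.2⟩
  set S : Set ℝ := {t ∈ Icc y₁ t₁ | ∀ r ∈ Icc y₁ t, 0 ≤ p r ∧ a ≤ u r} with hSdef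
  have hy₁t₁ : y₁ ≤ t₁ := ht₁.1
  have hSne : S.Nonempty := by
    refine ⟨y₁, left_mem_Icc.2 hy₁t₁, ?_⟩
    intro r hr
    have : r = y₁ := le_antisymm hr.2 hr.1
    rw [this]; exact ⟨hpa, hua⟩
  have hSbdd : BddAbove S := ⟨t₁, fun t ht => ht.1.2⟩
  set τ := sSup S with hτdef
  have hy₁S : y₁ ∈ S := by
    refine ⟨left_mem_Icc.2 hy₁t₁, ?_⟩
    intro r hr
    have : r = y₁ := le_antisymm hr.2 hr.1
    rw [this]; exact ⟨hpa, hua⟩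
  have hτ1 : y₁ ≤ τ := le_csSup hSbdd hy₁S
  have hτ2 : τ ≤ t₁ := csSup_le hSne (fun t ht => ht.1.2)
  have hτ0L : τ ∈ Icc 0 L := ⟨le_trans hy₁.1 hτ1, le_trans hτ2 ht₁m.2⟩
  have hgood : ∀ r ∈ Ico y₁ τ, 0 ≤ p r ∧ a ≤ u r := by
    intro r hr
    obtain ⟨t, htS, hrt⟩ := exists_lt_of_lt_csSup hSne hr.2
    exact htS.2 r ⟨hr.1, hrt.le⟩
  have hτprop : 0 ≤ p τ ∧ a ≤ u τ := by
    rcases eq_or_lt_of_le hτ1 with heq | hlt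
    · rw [← heq]; exact ⟨hpa, hua⟩
    · have hNB : (𝓝[Ico y₁ τ] τ).NeBot := by
        rw [← mem_closure_iff_nhdsWithin_neBot, closure_Ico (ne_of_lt hlt)]
        exact right_mem_Icc.2 hlt.le
      have hsub : Ico y₁ τ ⊆ Icc 0 L := fun r hr =>
        ⟨le_trans hy₁.1 hr.1, le_trans hr.2.le hτ0L.2⟩
      have hle : 𝓝[Ico y₁ τ] τ ≤ 𝓝[Icc 0 L] τ := nhdsWithin_mono τ hsub
      have hmemF : ∀ᶠ t in 𝓝[Ico y₁ τ] τ, t ∈ Ico y₁ τ := self_mem_nhdsWithin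
      constructor
      · refine ge_of_tendsto (((hpcont τ hτ0L).mono_left hle)) ?_
        exact hmemF.mono (fun t ht => (hgood t ht).1)
      · refine ge_of_tendsto (((hucont τ hτ0L).mono_left hle)) ?_
        exact hmemF.mono (fun t ht => (hgood t ht).2)
  have hτS : τ ∈ S := by
    refine ⟨⟨hτ1, hτ2⟩, ?_⟩
    intro r hr
    rcases eq_or_lt_of_le hr.2 with heq | hlt
    · rw [heq]; exact hτprop
    · exact hgood r ⟨hr.1, hlt⟩
  have hτlt : τ < t₁ := by
    rcases eq_or_lt_of_le hτ2 with heq | h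
    · exfalso
      obtain ⟨h1, h2⟩ := hτS.2 t₁ ⟨hy₁t₁, heq.ge⟩
      linarith [hbad1 h1]
    · exact h
  -- eventually to the right, p > 0
  set F := 𝓝[Ioc τ t₁] τ with hFdef
  have hNB : F.NeBot := by
    rw [hFdef, ← mem_closure_iff_nhdsWithin_neBot, closure_Ioc (ne_of_lt hτlt)]
    exact left_mem_Icc.2 hτlt.le
  have hsub2 : Ioc τ t₁ ⊆ Icc 0 L := fun r hr =>
    ⟨le_trans hτ0L.1 hr.1.le, le_trans hr.2 ht₁m.2⟩
  have hevm : ∀ᶠ t in F, t ∈ Ioc τ t₁ := self_mem_nhdsWithin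
  have hev : ∀ᶠ t in F, 0 < p t := by
    rcases eq_or_lt_of_le hτprop.1 with heq | hlt2
    · -- p τ = 0 : slope argument
      have hD : 0 < 2 * clampI (-P) P (p τ) + 2 * g (u τ) := by
        rw [← heq, clampI_zero hP]
        have := hgpos (u τ) (lt_of_lt_of_le ha hτprop.2)
        linarith
      have hslope : Tendsto (slope p τ) (𝓝[Icc 0 L \ {τ}] τ)
          (𝓝 (2 * clampI (-P) P (p τ) + 2 * g (u τ))) :=
        hasDerivWithinAt_iff_tendsto_slope.1 (hp τ hτ0L)
      have hle : F ≤ 𝓝[Icc 0 L \ {τ}] τ :=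
        nhdsWithin_mono τ (fun r hr => ⟨hsub2 hr, by simp [ne_of_gt hr.1]⟩)
      have hev1 : ∀ᶠ t in F, 0 < slope p τ t :=
        (hslope.mono_left hle).eventually (eventually_gt_nhds hD)
      refine (hev1.and hevm).mono ?_
      rintro t ⟨hts, htm⟩
      rw [slope_def_field] at hts
      have h1 : 0 < t - τ := by linarith [htm.1]
      have := mul_pos hts h1
      rw [div_mul_cancel₀ _ (ne_of_gt h1)] at this
      linarith
    · -- p τ > 0 : continuity
      have hle : F ≤ 𝓝[Icc 0 L] τ := nhdsWithin_mono τ hsub2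
      exact ((hpcont τ hτ0L).eventually (eventually_gt_nhds hlt2)).filter_mono hle
  -- extract an interval (τ, m]
  obtain ⟨V, hV, hVsub⟩ := Filter.eventually_iff_exists_mem.1 (hev.and hevm)
  rw [hFdef, mem_nhdsWithin] at hV
  obtain ⟨W, hWopen, hWτ, hWsub⟩ := hV
  obtain ⟨ε, hε, hball⟩ := Metric.isOpen_iff.1 hWopen τ hWτ
  set m := min (τ + ε / 2) t₁ with hmdef
  have hτm : τ < m := lt_min (by linarith) hτlt
  have hmt₁ : m ≤ t₁ := min_le_right _ _
  have hint : ∀ t ∈ Ioc τ m, 0 < p t := by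
    intro t ht
    have h1 : t ∈ Ioc τ t₁ := ⟨ht.1, le_trans ht.2 hmt₁⟩
    have h2 : t ∈ W := by
      apply hball
      rw [Metric.mem_ball, Real.dist_eq, abs_of_pos (by linarith [ht.1] : (0:ℝ) < t - τ)]
      have : t ≤ τ + ε / 2 := le_trans ht.2 (min_le_left _ _)
      linarith
    exact (hVsub t (hWsub ⟨h2, h1⟩)).1
  -- u is monotone on [τ, m]
  have hmono : MonotoneOn u (Icc τ m) := by
    apply mono_aux (U := fun t => clampI (-P) P (p t))
    · intro t ht
      exact (hu t ⟨le_trans hτ0L.1 ht.1, le_trans ht.2 (le_trans hmt₁ ht₁m.2)⟩).mono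
        (Icc_subset_Icc hτ0L.1 (le_trans hmt₁ ht₁m.2))
    · intro t ht
      exact clampI_nonneg hP (hint t ⟨ht.1, ht.2.le⟩).le
  have hmS : m ∈ S := by
    refine ⟨⟨le_trans hτ1 hτm.le, hmt₁⟩, ?_⟩
    intro r hr
    rcases le_or_gt r τ with h | h
    · exact hτS.2 r ⟨hr.1, h⟩
    · refine ⟨(hint r ⟨h, hr.2⟩).le, ?_⟩
      have := hmono (left_mem_Icc.2 hτm.le) ⟨h.le, hr.2⟩ h.le
      linarith [hτprop.2]
  have : m ≤ τ := le_csSup hSbdd hmS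
  linarith

/-- From a point with nonnegative slope and positive value `a`, `u(L) > a`. -/
lemma strict_growth (hP : 0 < P) (hL : 0 < L)
    (hgmono : Monotone g) (hgpos : ∀ x, 0 < x → 0 < g x)
    (hu : ∀ t ∈ Icc 0 L, HasDerivWithinAt u (clampI (-P) P (p t)) (Icc 0 L) t)
    (hp : ∀ t ∈ Icc 0 L, HasDerivWithinAt p (2 * clampI (-P) P (p t) + 2 * g (u t)) (Icc 0 L) t)
    {y₁ a : ℝ} (hy₁ : y₁ ∈ Ico 0 L) (ha : 0 < a) (hua : a ≤ u y₁) (hpa : 0 ≤ p y₁) :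
    a < u L := by
  have hy₁' : y₁ ∈ Icc 0 L := ⟨hy₁.1, hy₁.2.le⟩
  have hfwd := forward_inc hP hL hgmono hgpos hu hp hy₁' ha hua hpa
  set γ := g a with hγdef
  have hγ : 0 < γ := hgpos a ha
  set mid := (y₁ + L) / 2 with hmiddef
  have hmid1 : y₁ < mid := by rw [hmiddef]; linarith [hy₁.2]
  have hmid2 : mid < L := by rw [hmiddef]; linarith [hy₁.2]
  have hmidm : mid ∈ Icc y₁ L := ⟨hmid1.le, hmid2.le⟩
  set β := γ * (L - y₁) with hβdef
  have hβ : 0 < β := by apply mul_pos hγ; linarith [hy₁.2]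
  -- p t ≥ β for t ∈ [mid, L]
  have hpβ : ∀ t ∈ Icc mid L, β ≤ p t := by
    intro t ht
    have htm : t ∈ Icc y₁ L := ⟨le_trans hmid1.le ht.1, ht.2⟩
    have ht0L : t ∈ Icc 0 L := ⟨le_trans hy₁.1 htm.1, ht.2⟩
    have hgrow : 2 * γ * (t - y₁) ≤ p t - p y₁ := by
      apply growth_ge htm.1
      · intro r hr
        exact (hp r ⟨le_trans hy₁.1 hr.1, le_trans hr.2 ht.2⟩).mono
          (Icc_subset_Icc hy₁.1 ht0L.2)
      · intro r hr
        have hrm : r ∈ Icc y₁ L := ⟨hr.1.le, le_trans hr.2.le ht.2⟩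
        have ⟨hpr, hur⟩ := hfwd r hrm
        have h1 : 0 ≤ clampI (-P) P (p r) := clampI_nonneg hP hpr
        have h2 : γ ≤ g (u r) := hgmono hur
        linarith
    have h3 : β ≤ 2 * γ * (t - y₁) := by
      rw [hβdef]
      have : (L - y₁) / 2 ≤ t - y₁ := by
        have := ht.1
        rw [hmiddef] at this
        linarith
      nlinarith
    linarith
  set c := min P β with hcdef
  have hc : 0 < c := lt_min hP hβ
  -- u grows at rate at least c on [mid, L]
  have hgrow2 : c * (L - mid) ≤ u L - u mid := by
    apply growth_ge hmid2.le
    · intro r hr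
      exact (hu r ⟨le_trans hy₁.1 (le_trans hmid1.le hr.1), hr.2⟩).mono
        (Icc_subset_Icc (le_trans hy₁.1 hmid1.le) le_rfl)
    · intro r hr
      have hpr := hpβ r ⟨hr.1.le, hr.2.le⟩
      have h1 : min P (p r) ≤ clampI (-P) P (p r) := clampI_ge_min hP (le_trans hβ.le hpr)
      have h2 : c ≤ min P (p r) := le_min (min_le_left _ _) (le_trans (min_le_right _ _) hpr)
      linarith
  have humid : a ≤ u mid := (hfwd mid hmidm).2
  have : 0 < c * (L - mid) := mul_pos hc (by linarith)
  linarith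

/-- The solution is bounded above by the larger boundary value. -/
lemma u_le_M₂ (hP : 0 < P) (hL : 0 < L) {M₁ M₂ : ℝ} (hM₂ : 0 < M₂) (hMM : M₁ < M₂)
    (hgmono : Monotone g) (hgpos : ∀ x, 0 < x → 0 < g x)
    (hu : ∀ t ∈ Icc 0 L, HasDerivWithinAt u (clampI (-P) P (p t)) (Icc 0 L) t)
    (hp : ∀ t ∈ Icc 0 L, HasDerivWithinAt p (2 * clampI (-P) P (p t) + 2 * g (u t)) (Icc 0 L) t)
    (hu0 : u 0 = M₁) (huL : u L = M₂) :
    ∀ t ∈ Icc 0 L, u t ≤ M₂ := by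
  have hucont : ContinuousOn u (Icc 0 L) := fun t ht => (hu t ht).continuousWithinAt
  obtain ⟨y₁, hy₁m, hy₁max⟩ := isCompact_Icc.exists_isMaxOn (nonempty_Icc.2 hL.le) hucont
  by_contra hcon
  push_neg at hcon
  obtain ⟨t₂, ht₂, ht₂gt⟩ := hcon
  have hy₁big : M₂ < u y₁ := lt_of_lt_of_le ht₂gt (hy₁max ht₂)
  have hy₁Ioo : y₁ ∈ Ioo 0 L := by
    constructor
    · rcases eq_or_lt_of_le hy₁m.1 with h | h
      · exfalso; rw [← h, hu0] at hy₁big; linarith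
      · exact h
    · rcases eq_or_lt_of_le hy₁m.2 with h | h
      · exfalso; rw [h, huL] at hy₁big; linarith
      · exact h
  have hder : HasDerivAt u (clampI (-P) P (p y₁)) y₁ :=
    (hu y₁ hy₁m).hasDerivAt (Icc_mem_nhds hy₁Ioo.1 hy₁Ioo.2)
  have hloc : IsLocalMax u y₁ := hy₁max.isLocalMax (Icc_mem_nhds hy₁Ioo.1 hy₁Ioo.2)
  have hzero : clampI (-P) P (p y₁) = 0 := hloc.hasDerivAt_eq_zero hder
  have hpz : p y₁ = 0 := clampI_eq_zero hP hzero
  have := strict_growth hP hL hgmono hgpos hu hp (y₁ := y₁) (a := u y₁)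
    ⟨hy₁Ioo.1.le, hy₁Ioo.2⟩ (by linarith) le_rfl hpz.ge
  have : u L ≤ u y₁ := hy₁max (right_mem_Icc.2 hL.le)
  linarith

/-- With initial slope `P`, the slope stays at least `P`. -/
lemma endpoint_plus (hP : 0 < P) (hL : 0 < L)
    (hg0 : ∀ x, 0 ≤ g x)
    (hu : ∀ t ∈ Icc 0 L, HasDerivWithinAt u (clampI (-P) P (p t)) (Icc 0 L) t)
    (hp : ∀ t ∈ Icc 0 L, HasDerivWithinAt p (2 * clampI (-P) P (p t) + 2 * g (u t)) (Icc 0 L) t)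
    (hp0 : P ≤ p 0) :
    u L = u 0 + P * L := by
  have hinv : ∀ t ∈ Icc 0 L, P ≤ p t := by
    apply invariant_ge hp hp0
    intro t ht heq
    rw [heq, clampI_of_mem (by linarith) le_rfl]
    linarith [hg0 (u t)]
  have := eq_affine_aux hL.le hu (c := P) (fun t ht => by
    rw [clampI_of_ge (hinv t (Ioo_subset_Icc_self ht)) (by linarith)])
  rw [this]; ring

/-- With slope `≤ -P` somewhere before the end, the slope stays `≤ -P` afterwards. -/
lemma endpoint_minus (hP : 0 < P) (hL : 0 < L) {G : ℝ}
    (hgle : ∀ x, g x ≤ G) (hGP : G < P)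
    (hu : ∀ t ∈ Icc 0 L, HasDerivWithinAt u (clampI (-P) P (p t)) (Icc 0 L) t)
    (hp : ∀ t ∈ Icc 0 L, HasDerivWithinAt p (2 * clampI (-P) P (p t) + 2 * g (u t)) (Icc 0 L) t)
    {τ : ℝ} (hτ : τ ∈ Icc 0 L) (hpτ : p τ ≤ -P) :
    u L = u τ - P * (L - τ) := by
  have hinv : ∀ t ∈ Icc τ L, p t ≤ -P := by
    apply invariant_le (fun t ht => (hp t ⟨le_trans hτ.1 ht.1, ht.2⟩).mono
      (Icc_subset_Icc hτ.1 le_rfl)) hpτ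
    intro t ht heq
    rw [heq, clampI_of_mem le_rfl (by linarith)]
    linarith [hgle (u t)]
  have := eq_affine_aux hτ.2 (fun t ht => (hu t ⟨le_trans hτ.1 ht.1, ht.2⟩).mono
    (Icc_subset_Icc hτ.1 le_rfl)) (c := -P) (fun t ht => by
    rw [clampI_of_le (hinv t (Ioo_subset_Icc_self ht)) (by linarith)])
  rw [this]; ring

/-- The slope never goes below `-P`. -/
lemma p_ge_negP (hP : 0 < P) (hL : 0 < L) {G : ℝ}
    (hgle : ∀ x, g x ≤ G) (hGP : G < P)
    (hu : ∀ t ∈ Icc 0 L, HasDerivWithinAt u (clampI (-P) P (p t)) (Icc 0 L) t)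
    (hp : ∀ t ∈ Icc 0 L, HasDerivWithinAt p (2 * clampI (-P) P (p t) + 2 * g (u t)) (Icc 0 L) t)
    (hs : -P < p 0) (hule : ∀ t ∈ Icc 0 L, u t ≤ u L) :
    ∀ t ∈ Icc 0 L, -P ≤ p t := by
  have hucont : ContinuousOn u (Icc 0 L) := fun t ht => (hu t ht).continuousWithinAt
  have hpcont : ContinuousOn p (Icc 0 L) := fun t ht => (hp t ht).continuousWithinAt
  by_contra hcon
  push_neg at hcon
  obtain ⟨t₁, ht₁, hbad⟩ := hcon
  set B : Set ℝ := {t ∈ Icc 0 t₁ | p t ≤ -P} with hBdef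
  have hBne : B.Nonempty := ⟨t₁, right_mem_Icc.2 ht₁.1, hbad.le⟩
  have hBclosed : IsClosed B := by
    have : B = Icc 0 t₁ ∩ p ⁻¹' (Iic (-P)) := by ext t; simp [hBdef, and_comm]
    rw [this]
    exact (hpcont.mono (Icc_subset_Icc le_rfl ht₁.2)).preimage_isClosed_of_isClosed
      isClosed_Icc isClosed_Iic
  have hBcomp : IsCompact B := (isCompact_Icc (a := (0:ℝ)) (b := t₁)).of_isClosed_subset
    hBclosed (fun t ht => ht.1)
  set τ := sInf B with hτdef
  have hτB : τ ∈ B := hBcomp.sInf_mem hBne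
  have hτ0L : τ ∈ Icc 0 L := ⟨hτB.1.1, le_trans hτB.1.2 ht₁.2⟩
  rcases eq_or_lt_of_le hτ0L.2 with heqL | hltL
  · -- τ = L : slope contradiction at the right endpoint
    have hpL : p L ≤ -P := by rw [← heqL]; exact hτB.2
    have hclamp : clampI (-P) P (p L) = -P := clampI_of_le hpL (by linarith)
    have hder := hu L (right_mem_Icc.2 hL.le)
    rw [hclamp] at hder
    have hslope : Tendsto (slope u L) (𝓝[Icc 0 L \ {L}] L) (𝓝 (-P)) :=
      hasDerivWithinAt_iff_tendsto_slope.1 hder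
    have hNB : (𝓝[Ico 0 L] L).NeBot := by
      rw [← mem_closure_iff_nhdsWithin_neBot, closure_Ico (ne_of_lt hL)]
      exact right_mem_Icc.2 hL.le
    have hle : 𝓝[Ico 0 L] L ≤ 𝓝[Icc 0 L \ {L}] L :=
      nhdsWithin_mono L (fun r hr => ⟨⟨hr.1, hr.2.le⟩, by simp [ne_of_lt hr.2]⟩)
    have hev : ∀ᶠ t in 𝓝[Ico 0 L] L, slope u L t < 0 :=
      (hslope.mono_left hle).eventually (eventually_lt_nhds (by linarith : -P < 0))
    have hmem : ∀ᶠ t in 𝓝[Ico 0 L] L, t ∈ Ico 0 L := self_mem_nhdsWithin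
    obtain ⟨t, hts, htm⟩ := (hev.and hmem).exists
    rw [slope_def_field] at hts
    have h1 : t - L < 0 := by linarith [htm.2]
    have h2 : 0 < (u t - u L) / (t - L) * (t - L) := mul_pos_of_neg_of_neg hts h1
    rw [div_mul_cancel₀ _ (ne_of_lt h1)] at h2
    have := hule t ⟨htm.1, htm.2.le⟩
    linarith
  · -- τ < L : invariance and affine decrease
    have := endpoint_minus hP hL hgle hGP hu hp hτ0L hτB.2
    have h2 := hule τ hτ0L
    nlinarith [hP, hltL]

/-- The slope never exceeds `P`, provided `P` was chosen large enough. -/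
lemma p_le_P (hP : 0 < P) (hL : 0 < L) {G M₁ M₂ : ℝ} (hMM : M₁ < M₂)
    (hg0 : ∀ x, 0 ≤ g x) (hgle : ∀ x, g x ≤ G) (hG0 : 0 ≤ G)
    (hu : ∀ t ∈ Icc 0 L, HasDerivWithinAt u (clampI (-P) P (p t)) (Icc 0 L) t)
    (hp : ∀ t ∈ Icc 0 L, HasDerivWithinAt p (2 * clampI (-P) P (p t) + 2 * g (u t)) (Icc 0 L) t)
    (hu0 : u 0 = M₁) (huL : u L = M₂)
    (hs : p 0 < P) (hlow : ∀ t ∈ Icc 0 L, -P ≤ p t)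
    (hμP : (M₂ - M₁) / L < P)
    (hPbig : Real.exp (2 * L) * ((M₂ - M₁) / L + 2 * G * L) < P) :
    ∀ t ∈ Icc 0 L, p t ≤ P := by
  have hucont : ContinuousOn u (Icc 0 L) := fun t ht => (hu t ht).continuousWithinAt
  have hpcont : ContinuousOn p (Icc 0 L) := fun t ht => (hp t ht).continuousWithinAt
  by_contra hcon
  push_neg at hcon
  obtain ⟨t₁, ht₁, hbad⟩ := hcon
  set B : Set ℝ := {t ∈ Icc 0 t₁ | P ≤ p t} with hBdef
  have hBne : B.Nonempty := ⟨t₁, right_mem_Icc.2 ht₁.1, hbad.le⟩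
  have hBclosed : IsClosed B := by
    have : B = Icc 0 t₁ ∩ p ⁻¹' (Ici P) := by ext t; simp [hBdef, and_comm]
    rw [this]
    exact (hpcont.mono (Icc_subset_Icc le_rfl ht₁.2)).preimage_isClosed_of_isClosed
      isClosed_Icc isClosed_Ici
  have hBcomp : IsCompact B := (isCompact_Icc (a := (0:ℝ)) (b := t₁)).of_isClosed_subset
    hBclosed (fun t ht => ht.1)
  set τ := sInf B with hτdef
  have hτB : τ ∈ B := hBcomp.sInf_mem hBne
  have hτ0L : τ ∈ Icc 0 L := ⟨hτB.1.1, le_trans hτB.1.2 ht₁.2⟩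
  have hbefore : ∀ r ∈ Ico 0 τ, p r < P := by
    intro r hr
    by_contra hge
    push_neg at hge
    have : r ∈ B := ⟨⟨hr.1, le_trans hr.2.le hτB.1.2⟩, hge⟩
    have : τ ≤ r := csInf_le hBcomp.bddBelow this
    linarith [hr.2]
  -- invariance: p ≥ P on [τ, L]
  have hup : ∀ t ∈ Icc τ L, P ≤ p t := by
    apply invariant_ge (fun t ht => (hp t ⟨le_trans hτ0L.1 ht.1, ht.2⟩).mono
      (Icc_subset_Icc hτ0L.1 le_rfl)) hτB.2
    intro t ht heq
    rw [heq, clampI_of_mem (by linarith) le_rfl]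
    linarith [hg0 (u t)]
  -- mean value theorem gives an interior point with moderate slope
  set μ := (M₂ - M₁) / L with hμdef
  have hμpos : 0 < μ := div_pos (by linarith) hL
  obtain ⟨ξ, hξ, hξeq⟩ := exists_hasDerivAt_eq_slope u (fun t => clampI (-P) P (p t)) hL
    hucont (fun x hx => (hu x (Ioo_subset_Icc_self hx)).hasDerivAt (Icc_mem_nhds hx.1 hx.2))
  rw [hu0, huL, sub_zero] at hξeq
  have hpξ : p ξ = μ := by
    apply clampI_eq_of_abs_lt (by rw [abs_of_pos hμpos]; exact hμP)
    rw [hξeq, hμdef]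
  have hξτ : ξ < τ := by
    by_contra hge
    push_neg at hge
    have := hup ξ ⟨hge, hξ.2.le⟩
    rw [hpξ] at this
    linarith
  -- the weighted slope ψ = e^{-2t} p grows at most like 2G
  set V : ℝ → ℝ := fun t => -2 * Real.exp (-2 * t) * p t
    + Real.exp (-2 * t) * (2 * clampI (-P) P (p t) + 2 * g (u t)) with hVdef
  have hψd : ∀ t ∈ Icc ξ τ, HasDerivWithinAt (fun t => Real.exp (-2 * t) * p t) (V t)
      (Icc ξ τ) t := by
    intro t ht
    have hexp : HasDerivAt (fun t : ℝ => Real.exp (-2 * t)) (-2 * Real.exp (-2 * t)) t := by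
      have hid : HasDerivAt (fun x : ℝ => -2 * x) (-2) t := by
        simpa using (hasDerivAt_id t).const_mul (-2)
      simpa [mul_comm] using hid.exp
    have hsub : Icc ξ τ ⊆ Icc 0 L := Icc_subset_Icc hξ.1.le hτ0L.2
    exact (hexp.hasDerivWithinAt).mul ((hp t (hsub ht)).mono hsub)
  have hVle : ∀ t ∈ Ioo ξ τ, V t ≤ 2 * G := by
    intro t ht
    have ht0L : t ∈ Icc 0 L := ⟨le_trans hξ.1.le ht.1.le, le_trans ht.2.le hτ0L.2⟩
    have hptP : p t ≤ P := (hbefore t ⟨ht0L.1, ht.2⟩).le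
    have hptm : -P ≤ p t := hlow t ht0L
    have hcl : clampI (-P) P (p t) = p t := clampI_of_mem hptm hptP
    have hVeq : V t = Real.exp (-2 * t) * (2 * g (u t)) := by
      rw [hVdef]; simp only; rw [hcl]; ring
    rw [hVeq]
    have he1 : Real.exp (-2 * t) ≤ 1 := Real.exp_le_one_iff.2 (by linarith [ht0L.1])
    have he0 : 0 < Real.exp (-2 * t) := Real.exp_pos _
    have hg1 := hg0 (u t)
    have hg2 := hgle (u t)
    nlinarith
  have hgrow := growth_le hξτ.le hψd hVle
  -- numeric contradiction
  have hψξ : Real.exp (-2 * ξ) * p ξ ≤ μ := by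
    rw [hpξ]
    have he1 : Real.exp (-2 * ξ) ≤ 1 := Real.exp_le_one_iff.2 (by linarith [hξ.1])
    nlinarith [Real.exp_pos (-2 * ξ)]
  have hψτ : Real.exp (-2 * L) * P ≤ Real.exp (-2 * τ) * p τ := by
    have h1 : Real.exp (-2 * L) ≤ Real.exp (-2 * τ) := Real.exp_le_exp.2 (by linarith [hτ0L.2])
    have h2 : P ≤ p τ := hτB.2
    nlinarith [Real.exp_pos (-2 * L), Real.exp_pos (-2 * τ), hP]
  have hτξL : τ - ξ ≤ L := by
    have := hξ.1
    have := hτ0L.2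
    linarith
  have hfinal : Real.exp (-2 * L) * P ≤ μ + 2 * G * L := by
    have := hgrow
    nlinarith [hG0]
  have hee : Real.exp (2 * L) * Real.exp (-2 * L) = 1 := by
    rw [← Real.exp_add]; norm_num
  have hE : 0 < Real.exp (2 * L) := Real.exp_pos _
  nlinarith [hPbig, mul_le_mul_of_nonneg_left hfinal hE.le]

end Traj

section Glue

variable {α M₁ M₂ L : ℝ}

lemma hasDerivWithinAt_fst' {w : ℝ → ℝ × ℝ} {d : ℝ × ℝ} {s : Set ℝ} {t : ℝ}
    (h : HasDerivWithinAt w d s t) : HasDerivWithinAt (fun r => (w r).1) d.1 s t := by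
  have := (hasFDerivAt_fst (𝕜 := ℝ) (E := ℝ) (F := ℝ) (p := w t)).comp_hasDerivWithinAt t h
  exact this

lemma hasDerivWithinAt_snd' {w : ℝ → ℝ × ℝ} {d : ℝ × ℝ} {s : Set ℝ} {t : ℝ}
    (h : HasDerivWithinAt w d s t) : HasDerivWithinAt (fun r => (w r).2) d.2 s t := by
  have := (hasFDerivAt_snd (𝕜 := ℝ) (E := ℝ) (F := ℝ) (p := w t)).comp_hasDerivWithinAt t h
  exact this

/-- convert a derivative within `Icc 0 L` at `t ∈ Ico 0 L` to one within `Ici t`. -/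
lemma deriv_Icc_to_Ici {E' : Type*} [NormedAddCommGroup E'] [NormedSpace ℝ E']
    {w : ℝ → E'} {d : E'} {t : ℝ} (htL : t < L)
    (ht0 : 0 ≤ t) (h : HasDerivWithinAt w d (Icc 0 L) t) :
    HasDerivWithinAt w d (Ici t) t := by
  have h1 : HasDerivWithinAt w d (Icc t L) t := h.mono (Icc_subset_Icc ht0 le_rfl)
  have h2 : Icc t L =ᶠ[𝓝 t] Ici t := by
    apply Filter.eventuallyEq_set.2
    filter_upwards [Iio_mem_nhds htL] with y hy
    simp only [mem_Icc, mem_Ici]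
    exact ⟨fun h => h.1, fun h => ⟨h, hy.le⟩⟩
  exact h1.congr_set h2

/-- Positivity of the first component, via uniqueness of the constant solution. -/
lemma u_pos (hα : 0 < α) (hM₁ : 0 < M₁) (hM : M₁ < M₂) (hL : 0 < L)
    {w : ℝ → ℝ × ℝ}
    (hw : ∀ t ∈ Icc 0 L, HasDerivWithinAt w (vf α M₁ M₂ L t (w t)) (Icc 0 L) t)
    (hu0 : (w 0).1 = M₁) (huL : (w L).1 = M₂) :
    ∀ t ∈ Icc 0 L, 0 < (w t).1 := by
  set P := PB α M₁ M₂ L with hPdef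
  have hP : 0 < P := PB_pos hα hM₁ hM hL
  have hwcont : ContinuousOn w (Icc 0 L) := fun t ht => (hw t ht).continuousWithinAt
  have hucont : ContinuousOn (fun t => (w t).1) (Icc 0 L) := hwcont.fst
  by_contra hcon
  push_neg at hcon
  obtain ⟨t₂, ht₂, ht₂le⟩ := hcon
  obtain ⟨y₀, hy₀m, hy₀min⟩ := isCompact_Icc.exists_isMinOn (nonempty_Icc.2 hL.le) hucont
  have hy₀le : (w y₀).1 ≤ 0 := le_trans (hy₀min ht₂) ht₂le
  have hy₀Ioo : y₀ ∈ Ioo 0 L := by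
    constructor
    · rcases eq_or_lt_of_le hy₀m.1 with h | h
      · exfalso; rw [← h, hu0] at hy₀le; linarith
      · exact h
    · rcases eq_or_lt_of_le hy₀m.2 with h | h
      · exfalso; rw [h, huL] at hy₀le; linarith
      · exact h
  -- the derivative of the first component vanishes at the interior minimum
  have hder : HasDerivAt (fun t => (w t).1) (clampI (-P) P ((w y₀).2)) y₀ := by
    have := hasDerivWithinAt_fst' (hw y₀ hy₀m)
    exact this.hasDerivAt (Icc_mem_nhds hy₀Ioo.1 hy₀Ioo.2)
  have hloc : IsLocalMin (fun t => (w t).1) y₀ := hy₀min.isLocalMin (Icc_mem_nhds hy₀Ioo.1 hy₀Ioo.2)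
  have hzero : clampI (-P) P ((w y₀).2) = 0 := hloc.hasDerivAt_eq_zero hder
  have hpz : (w y₀).2 = 0 := clampI_eq_zero hP hzero
  -- the constant function is a solution with the same value at y₀
  have hgz : gfun α M₂ ((w y₀).1) = 0 := gfun_eq_zero (by linarith) hy₀le
  have hconst : ∀ t ∈ Ico y₀ L,
      HasDerivWithinAt (fun _ : ℝ => w y₀) (vf α M₁ M₂ L t ((fun _ : ℝ => w y₀) t)) (Ici t) t := by
    intro t ht
    have : vf α M₁ M₂ L t (w y₀) = (0, 0) := by
      simp only [vf, hpz, ← hPdef, hgz, clampI_zero hP]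
      norm_num
    rw [this]
    exact hasDerivWithinAt_const t _ (w y₀)
  have hwder : ∀ t ∈ Ico y₀ L, HasDerivWithinAt w (vf α M₁ M₂ L t (w t)) (Ici t) t := by
    intro t ht
    exact deriv_Icc_to_Ici ht.2 (le_trans hy₀m.1 ht.1)
      (hw t ⟨le_trans hy₀m.1 ht.1, ht.2.le⟩)
  have huniq := ODE_solution_unique (v := vf α M₁ M₂ L) (K := KV α M₂)
    (fun t => vf_lipschitz hα (by linarith : (0:ℝ) ≤ M₂) t)
    (hwcont.mono (Icc_subset_Icc hy₀m.1 le_rfl)) hwder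
    continuousOn_const hconst rfl
  have : w L = w y₀ := huniq (right_mem_Icc.2 hy₀m.2)
  rw [← this] at hy₀le
  rw [huL] at hy₀le
  linarith

end Glue

section Shooting

variable {α M₁ M₂ L : ℝ}

/-- Main existence result: a positive solution of the (un-truncated) system with the
prescribed boundary values. -/
lemma exists_good_sol (hα : 0 < α) (hM₁ : 0 < M₁) (hM : M₁ < M₂) (hL : 0 < L) :
    ∃ u p : ℝ → ℝ,
      (∀ t ∈ Icc 0 L, HasDerivWithinAt u (p t) (Icc 0 L) t) ∧
      (∀ t ∈ Icc 0 L, HasDerivWithinAt p (2 * p t + 2 * fRHS α (u t)) (Icc 0 L) t) ∧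
      u 0 = M₁ ∧ u L = M₂ ∧ (∀ t ∈ Icc 0 L, 0 < u t) := by
  have hM₂0 : 0 < M₂ := hM₁.trans hM
  set P := PB α M₁ M₂ L with hPdef
  set G := GB α M₂ with hGdef
  have hP : 0 < P := PB_pos hα hM₁ hM hL
  have hGP : G < P := PB_gt_GB hα hM₁ hM hL
  have hG0 : 0 ≤ G := (GB_pos hα hM₂0).le
  have hPL : M₂ - M₁ < P * L := PB_mul_L hα hM₁ hM hL
  -- basic properties of the truncated nonlinearity
  have hgmono : Monotone (gfun α M₂) := gfun_mono hα hM₂0.le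
  have hgpos : ∀ x, 0 < x → 0 < gfun α M₂ x := fun x hx => gfun_pos hα hM₂0 hx
  have hg0 : ∀ x, 0 ≤ gfun α M₂ x := gfun_nonneg hα hM₂0.le
  have hgle : ∀ x, gfun α M₂ x ≤ G := fun x => gfun_le hα hM₂0.le x
  -- the family of solutions of the truncated system
  have hchoice : ∀ s : ℝ, ∃ w : ℝ → ℝ × ℝ, w 0 = (M₁, s) ∧
      ∀ t ∈ Icc 0 L, HasDerivWithinAt w (vf α M₁ M₂ L t (w t)) (Icc 0 L) t :=
    fun s => exists_sol hα hM₁ hM hL s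
  choose sol hsol0 hsold using hchoice
  have hsolcont : ∀ s, ContinuousOn (sol s) (Icc 0 L) :=
    fun s t ht => (hsold s t ht).continuousWithinAt
  -- component derivative statements in the form needed for the trajectory lemmas
  have hud : ∀ s, ∀ t ∈ Icc 0 L, HasDerivWithinAt (fun r => (sol s r).1)
      (clampI (-P) P ((fun r => (sol s r).2) t)) (Icc 0 L) t := by
    intro s t ht
    exact hasDerivWithinAt_fst' (hsold s t ht)
  have hpd : ∀ s, ∀ t ∈ Icc 0 L, HasDerivWithinAt (fun r => (sol s r).2)
      (2 * clampI (-P) P ((fun r => (sol s r).2) t) + 2 * gfun α M₂ ((fun r => (sol s r).1) t))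
      (Icc 0 L) t := by
    intro s t ht
    exact hasDerivWithinAt_snd' (hsold s t ht)
  have hu0 : ∀ s, (sol s 0).1 = M₁ := fun s => by rw [hsol0 s]
  have hp0 : ∀ s, (sol s 0).2 = s := fun s => by rw [hsol0 s]
  -- the shooting map
  set S : ℝ → ℝ := fun s => (sol s L).1 with hSdef
  -- continuity of the shooting map via Grönwall
  have hSlip : ∀ s₁ s₂ : ℝ, dist (S s₁) (S s₂) ≤ dist s₁ s₂ * Real.exp ((KV α M₂ : ℝ) * L) := by
    intro s₁ s₂
    have hder : ∀ s, ∀ t ∈ Ico 0 L,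
        HasDerivWithinAt (sol s) (vf α M₁ M₂ L t (sol s t)) (Ici t) t := by
      intro s t ht
      exact deriv_Icc_to_Ici ht.2 ht.1 (hsold s t ⟨ht.1, ht.2.le⟩)
    have hinit : dist (sol s₁ 0) (sol s₂ 0) ≤ dist s₁ s₂ := by
      rw [hsol0, hsol0, Prod.dist_eq]
      simp only [dist_self]
      rw [max_eq_right dist_nonneg]
    have := dist_le_of_trajectories_ODE (v := vf α M₁ M₂ L) (K := KV α M₂)
      (fun t => vf_lipschitz hα hM₂0.le t)
      (hsolcont s₁) (hder s₁) (hsolcont s₂) (hder s₂) hinit L (right_mem_Icc.2 hL.le)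
    rw [sub_zero] at this
    calc dist (S s₁) (S s₂) ≤ dist (sol s₁ L) (sol s₂ L) := by
          rw [Prod.dist_eq]; exact le_max_left _ _
      _ ≤ dist s₁ s₂ * Real.exp ((KV α M₂ : ℝ) * L) := this
  have hScont : Continuous S := by
    have : LipschitzWith (Real.toNNReal (Real.exp ((KV α M₂ : ℝ) * L))) S := by
      apply LipschitzWith.of_dist_le_mul
      intro s₁ s₂
      rw [Real.coe_toNNReal _ (Real.exp_pos _).le]
      calc dist (S s₁) (S s₂) ≤ dist s₁ s₂ * Real.exp ((KV α M₂ : ℝ) * L) := hSlip s₁ s₂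
        _ = Real.exp ((KV α M₂ : ℝ) * L) * dist s₁ s₂ := by ring
    exact this.continuous
  -- value of the shooting map at the endpoints of [-P, P]
  have hSP : S P = M₁ + P * L := by
    have := endpoint_plus hP hL hg0 (hud P) (hpd P) (by rw [hp0 P])
    rw [hSdef]
    simp only at this ⊢
    rw [this, hu0]
  have hSmP : S (-P) = M₁ - P * L := by
    have := endpoint_minus hP hL hgle hGP (hud (-P)) (hpd (-P))
      (left_mem_Icc.2 hL.le) (by rw [hp0 (-P)])
    rw [hSdef]
    simp only at this ⊢
    rw [this, hu0]
    ring
  -- intermediate value theorem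
  have hIVT := intermediate_value_Icc (by linarith : -P ≤ P) hScont.continuousOn
  have hM₂mem : M₂ ∈ Icc (S (-P)) (S P) := by
    rw [hSP, hSmP]
    constructor
    · nlinarith
    · nlinarith
  obtain ⟨sstar, hsm, hseq⟩ := hIVT hM₂mem
  have hs1 : -P < sstar := by
    rcases eq_or_lt_of_le hsm.1 with h | h
    · exfalso
      rw [← h, hSmP] at hseq
      nlinarith
    · exact h
  have hs2 : sstar < P := by
    rcases eq_or_lt_of_le hsm.2 with h | h
    · exfalso
      rw [h, hSP] at hseq
      nlinarith
    · exact h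
  -- the chosen trajectory
  set u : ℝ → ℝ := fun r => (sol sstar r).1 with hudef
  set p : ℝ → ℝ := fun r => (sol sstar r).2 with hpdef
  have huu0 : u 0 = M₁ := hu0 sstar
  have huuL : u L = M₂ := hseq
  have hpp0 : p 0 = sstar := hp0 sstar
  have hu' := hud sstar
  have hp' := hpd sstar
  -- a priori bounds
  have hupos : ∀ t ∈ Icc 0 L, 0 < u t :=
    u_pos hα hM₁ hM hL (hsold sstar) huu0 huuL
  have hule : ∀ t ∈ Icc 0 L, u t ≤ M₂ :=
    u_le_M₂ hP hL hM₂0 hM hgmono hgpos hu' hp' huu0 huuL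
  have hlow : ∀ t ∈ Icc 0 L, -P ≤ p t := by
    apply p_ge_negP hP hL hgle hGP hu' hp' (by show -P < (sol sstar 0).2; rw [hp0]; exact hs1)
    intro t ht
    exact (hule t ht).trans_eq huuL.symm
  have hupp : ∀ t ∈ Icc 0 L, p t ≤ P :=
    p_le_P hP hL hM hg0 hgle hG0 hu' hp' huu0 huuL (by show (sol sstar 0).2 < P; rw [hp0]; exact hs2) hlow
      (PB_gt_mu hα hM₁ hM hL) (PB_gt_exp hα hM₁ hM hL)
  -- on the trajectory, the truncations are inactive
  refine ⟨u, p, ?_, ?_, huu0, huuL, hupos⟩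
  · intro t ht
    have := hu' t ht
    rwa [clampI_of_mem (hlow t ht) (hupp t ht)] at this
  · intro t ht
    have := hp' t ht
    rwa [clampI_of_mem (hlow t ht) (hupp t ht),
      gfun_eq hM₂0.le (hupos t ht).le (hule t ht)] at this

end Shooting

section Regularity

variable {α M₁ M₂ L : ℝ}

lemma continuous_fRHS (α : ℝ) : Continuous (fRHS α) :=
  continuous_iff_continuousAt.2 fun x => (hasDerivAt_fRHS α x).continuousAt

lemma hasDerivAt_exp_neg2 (t : ℝ) :
    HasDerivAt (fun t : ℝ => Real.exp (-2 * t)) (-2 * Real.exp (-2 * t)) t := by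
  have hid : HasDerivAt (fun x : ℝ => -2 * x) (-2) t := by
    simpa using (hasDerivAt_id t).const_mul (-2)
  simpa [mul_comm] using hid.exp

lemma build_solution (hα : 0 < α) (hL : 0 < L) {u p : ℝ → ℝ}
    (hu : ∀ t ∈ Icc 0 L, HasDerivWithinAt u (p t) (Icc 0 L) t)
    (hp : ∀ t ∈ Icc 0 L, HasDerivWithinAt p (2 * p t + 2 * fRHS α (u t)) (Icc 0 L) t) :
    ContDiffOn ℝ 2 u (Icc 0 L) ∧
    ∀ y ∈ Ioo 0 L, deriv (fun t => Real.exp (-2 * t) * deriv u t) y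
      = 2 * Real.exp (-2 * y) * fRHS α (u y) := by
  have hUD : UniqueDiffOn ℝ (Icc (0:ℝ) L) := uniqueDiffOn_Icc hL
  have hucont : ContinuousOn u (Icc 0 L) := fun t ht => (hu t ht).continuousWithinAt
  have hpcont : ContinuousOn p (Icc 0 L) := fun t ht => (hp t ht).continuousWithinAt
  have hdw : ∀ t ∈ Icc (0:ℝ) L, derivWithin u (Icc 0 L) t = p t :=
    fun t ht => (hu t ht).derivWithin (hUD t ht)
  have hdp : ∀ t ∈ Icc (0:ℝ) L, derivWithin p (Icc 0 L) t = 2 * p t + 2 * fRHS α (u t) :=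
    fun t ht => (hp t ht).derivWithin (hUD t ht)
  have hpC1 : ContDiffOn ℝ 1 p (Icc 0 L) := by
    rw [show (1 : WithTop ℕ∞) = 0 + 1 by norm_num, contDiffOn_succ_iff_derivWithin hUD]
    refine ⟨fun t ht => (hp t ht).differentiableWithinAt, by simp, ?_⟩
    rw [contDiffOn_zero]
    apply ContinuousOn.congr (f := fun t => 2 * p t + 2 * fRHS α (u t))
    · exact (continuousOn_const.mul hpcont).add
        (continuousOn_const.mul ((continuous_fRHS α).comp_continuousOn hucont))
    · exact hdp
  have huC2 : ContDiffOn ℝ 2 u (Icc 0 L) := by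
    rw [show (2 : WithTop ℕ∞) = 1 + 1 by norm_num, contDiffOn_succ_iff_derivWithin hUD]
    refine ⟨fun t ht => (hu t ht).differentiableWithinAt, by simp, ?_⟩
    exact hpC1.congr hdw
  refine ⟨huC2, ?_⟩
  intro y hy
  have hmem : Icc (0:ℝ) L ∈ 𝓝 y := Icc_mem_nhds hy.1 hy.2
  have hderiv_eq : ∀ t ∈ Ioo (0:ℝ) L, deriv u t = p t := by
    intro t ht
    exact ((hu t (Ioo_subset_Icc_self ht)).hasDerivAt (Icc_mem_nhds ht.1 ht.2)).deriv
  have hEv : (fun t => Real.exp (-2 * t) * deriv u t) =ᶠ[𝓝 y]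
      (fun t => Real.exp (-2 * t) * p t) := by
    filter_upwards [isOpen_Ioo.mem_nhds hy] with t ht
    rw [hderiv_eq t ht]
  rw [hEv.deriv_eq]
  have hprod : HasDerivAt (fun t => Real.exp (-2 * t) * p t)
      (-2 * Real.exp (-2 * y) * p y + Real.exp (-2 * y) * (2 * p y + 2 * fRHS α (u y))) y :=
    (hasDerivAt_exp_neg2 y).mul ((hp y (Ioo_subset_Icc_self hy)).hasDerivAt hmem)
  rw [hprod.deriv]
  ring

/-- Any classical solution of the stated equation satisfies the second-order ODE pointwise. -/
lemma second_order (hα : 0 < α) (hL : 0 < L) {u : ℝ → ℝ}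
    (hC2 : ContDiffOn ℝ 2 u (Icc 0 L))
    (heqn : ∀ y ∈ Ioo (0:ℝ) L, deriv (fun t => Real.exp (-2 * t) * deriv u t) y
      = 2 * Real.exp (-2 * y) * fRHS α (u y)) :
    ∀ y ∈ Ioo (0:ℝ) L,
      HasDerivAt u (deriv u y) y ∧
      HasDerivAt (deriv u) (2 * deriv u y + 2 * fRHS α (u y)) y := by
  have hC2' : ContDiffOn ℝ 2 u (Ioo 0 L) := hC2.mono Ioo_subset_Icc_self
  have hd1 : DifferentiableOn ℝ u (Ioo 0 L) := hC2'.differentiableOn (by norm_num)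
  have hderC1 : ContDiffOn ℝ 1 (deriv u) (Ioo 0 L) :=
    hC2'.deriv_of_isOpen isOpen_Ioo (by norm_num)
  intro y hy
  have hyat : HasDerivAt u (deriv u y) y :=
    ((hd1 y hy).differentiableAt (isOpen_Ioo.mem_nhds hy)).hasDerivAt
  have hu'at : HasDerivAt (deriv u) (deriv (deriv u) y) y :=
    (((hderC1.differentiableOn one_ne_zero) y hy).differentiableAt
      (isOpen_Ioo.mem_nhds hy)).hasDerivAt
  refine ⟨hyat, ?_⟩
  have hprod : HasDerivAt (fun t => Real.exp (-2 * t) * deriv u t)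
      (-2 * Real.exp (-2 * y) * deriv u y + Real.exp (-2 * y) * deriv (deriv u) y) y :=
    (hasDerivAt_exp_neg2 y).mul hu'at
  have h1 := hprod.deriv
  rw [heqn y hy] at h1
  have he : Real.exp (-2 * y) ≠ 0 := ne_of_gt (Real.exp_pos _)
  have h2 : deriv (deriv u) y = 2 * deriv u y + 2 * fRHS α (u y) := by
    have h3 : Real.exp (-2 * y) * (deriv (deriv u) y - (2 * deriv u y + 2 * fRHS α (u y))) = 0 := by
      ring_nf
      ring_nf at h1
      linarith
    rcases mul_eq_zero.1 h3 with h | h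
    · exact absurd h he
    · linarith
  rw [← h2]
  exact hu'at

end Regularity

section Uniqueness

variable {α M₁ M₂ L : ℝ}

/-- Comparison of two solutions: maximum principle. -/
lemma sol_le (hα : 0 < α) (hL : 0 < L) {u₁ u₂ : ℝ → ℝ}
    (h1C : ContDiffOn ℝ 2 u₁ (Icc 0 L)) (h1pos : ∀ y ∈ Icc (0:ℝ) L, 0 < u₁ y)
    (h1eq : ∀ y ∈ Ioo (0:ℝ) L, deriv (fun t => Real.exp (-2 * t) * deriv u₁ t) y
      = 2 * Real.exp (-2 * y) * fRHS α (u₁ y))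
    (h10 : u₁ 0 = M₁) (h1L : u₁ L = M₂)
    (h2C : ContDiffOn ℝ 2 u₂ (Icc 0 L)) (h2pos : ∀ y ∈ Icc (0:ℝ) L, 0 < u₂ y)
    (h2eq : ∀ y ∈ Ioo (0:ℝ) L, deriv (fun t => Real.exp (-2 * t) * deriv u₂ t) y
      = 2 * Real.exp (-2 * y) * fRHS α (u₂ y))
    (h20 : u₂ 0 = M₁) (h2L : u₂ L = M₂) :
    ∀ y ∈ Icc (0:ℝ) L, u₁ y ≤ u₂ y := by
  have so1 := second_order hα hL h1C h1eq
  have so2 := second_order hα hL h2C h2eq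
  set d : ℝ → ℝ := fun y => u₁ y - u₂ y with hddef
  have hdcont : ContinuousOn d (Icc 0 L) := (h1C.continuousOn).sub (h2C.continuousOn)
  by_contra hcon
  push_neg at hcon
  obtain ⟨z, hz, hzlt⟩ := hcon
  obtain ⟨y₀, hy₀m, hy₀max⟩ := isCompact_Icc.exists_isMaxOn (nonempty_Icc.2 hL.le) hdcont
  have hdz : 0 < d z := by rw [hddef]; simp only; linarith
  have hd0 : 0 < d y₀ := lt_of_lt_of_le hdz (hy₀max hz)
  have hy₀ : y₀ ∈ Ioo (0:ℝ) L := by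
    constructor
    · rcases eq_or_lt_of_le hy₀m.1 with h | h
      · exfalso
        rw [hddef] at hd0
        simp only at hd0
        rw [← h, h10, h20] at hd0
        linarith
      · exact h
    · rcases eq_or_lt_of_le hy₀m.2 with h | h
      · exfalso
        rw [hddef] at hd0
        simp only at hd0
        rw [h, h1L, h2L] at hd0
        linarith
      · exact h
  have hmemN : Icc (0:ℝ) L ∈ 𝓝 y₀ := Icc_mem_nhds hy₀.1 hy₀.2
  have hd'at : HasDerivAt d (deriv u₁ y₀ - deriv u₂ y₀) y₀ :=
    ((so1 y₀ hy₀).1).sub ((so2 y₀ hy₀).1)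
  have hd'0 : deriv u₁ y₀ - deriv u₂ y₀ = 0 :=
    (hy₀max.isLocalMax hmemN).hasDerivAt_eq_zero hd'at
  have hu2pos : 0 < u₂ y₀ := h2pos y₀ (Ioo_subset_Icc_self hy₀)
  have hlt : u₂ y₀ < u₁ y₀ := by
    rw [hddef] at hd0
    simp only at hd0
    linarith
  have hf : fRHS α (u₂ y₀) < fRHS α (u₁ y₀) :=
    fRHS_strictMonoOn hα (mem_Ici.2 hu2pos.le)
      (mem_Ici.2 (h1pos y₀ (Ioo_subset_Icc_self hy₀)).le) hlt
  set d' : ℝ → ℝ := fun y => deriv u₁ y - deriv u₂ y with hd'def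
  set D : ℝ := (2 * deriv u₁ y₀ + 2 * fRHS α (u₁ y₀)) -
    (2 * deriv u₂ y₀ + 2 * fRHS α (u₂ y₀)) with hDdef
  have hD : 0 < D := by rw [hDdef]; linarith
  have hD'at : HasDerivAt d' D y₀ := ((so1 y₀ hy₀).2).sub ((so2 y₀ hy₀).2)
  have hslope : Tendsto (slope d' y₀) (𝓝[≠] y₀) (𝓝 D) :=
    hasDerivAt_iff_tendsto_slope.1 hD'at
  have hle : 𝓝[>] y₀ ≤ 𝓝[≠] y₀ :=
    nhdsWithin_mono y₀ (fun t ht => by simp [ne_of_gt (mem_Ioi.1 ht)])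
  have hev1 : ∀ᶠ t in 𝓝[>] y₀, 0 < slope d' y₀ t :=
    (hslope.mono_left hle).eventually (eventually_gt_nhds hD)
  have hev2 : ∀ᶠ t in 𝓝[>] y₀, t < L :=
    eventually_nhdsWithin_of_eventually_nhds (eventually_lt_nhds hy₀.2)
  obtain ⟨m, hm, hsub⟩ := mem_nhdsGT_iff_exists_Ioc_subset.1 (hev1.and hev2)
  have hmL : m < L := (hsub ⟨hm, le_rfl⟩).2
  have hd'pos : ∀ t ∈ Ioc y₀ m, 0 < d' t := by
    intro t ht
    have hs := (hsub ht).1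
    rw [slope_def_field] at hs
    have h1 : 0 < t - y₀ := by linarith [ht.1]
    have h2 := mul_pos hs h1
    rw [div_mul_cancel₀ _ (ne_of_gt h1)] at h2
    have h3 : d' y₀ = 0 := hd'0
    linarith
  have hmono : StrictMonoOn d (Icc y₀ m) := by
    apply strictMonoOn_of_deriv_pos (convex_Icc _ _)
    · exact hdcont.mono (Icc_subset_Icc hy₀.1.le hmL.le)
    · intro t ht
      rw [interior_Icc] at ht
      have htIoo : t ∈ Ioo (0:ℝ) L := ⟨lt_trans hy₀.1 ht.1, lt_trans ht.2 hmL⟩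
      have h1d : DifferentiableAt ℝ u₁ t := (so1 t htIoo).1.differentiableAt
      have h2d : DifferentiableAt ℝ u₂ t := (so2 t htIoo).1.differentiableAt
      have : deriv d t = deriv u₁ t - deriv u₂ t := by
        rw [hddef]
        exact deriv_sub h1d h2d
      rw [this]
      exact hd'pos t ⟨ht.1, ht.2.le⟩
  have hcmp1 : d y₀ < d m :=
    hmono (left_mem_Icc.2 hm.le) (right_mem_Icc.2 hm.le) hm
  have hcmp2 : d m ≤ d y₀ := hy₀max ⟨le_trans hy₀.1.le hm.le, hmL.le⟩
  linarith

end Uniqueness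

/-- Existence and uniqueness for the simplified equation with `ω = 0`:
Fix `0 < R₁ < R₂`, `L = log(R₂/R₁)`, `α > 0` and `0 < M₁ < M₂`.  Then there exists
exactly one positive C² function `u` on `I = [0, L]` satisfying the simplified
Euler–Lagrange equation on `(0, L)` with `u(0) = M₁`, `u(L) = M₂`
(uniqueness meaning any two solutions agree on `I`). -/
theorem stmt_8 (R₁ R₂ : ℝ) (hR₁ : 0 < R₁) (hR : R₁ < R₂)
    (α M₁ M₂ : ℝ) (hα : 0 < α) (hM₁ : 0 < M₁) (hM : M₁ < M₂)
    (L : ℝ) (hL : L = Real.log (R₂ / R₁)) :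
    ∃ u : ℝ → ℝ, IsSimplifiedSolution α M₁ M₂ L u ∧
      ∀ u₂ : ℝ → ℝ, IsSimplifiedSolution α M₁ M₂ L u₂ →
        Set.EqOn u₂ u (Set.Icc 0 L) := by
  have hL0 : 0 < L := by
    rw [hL]
    exact Real.log_pos ((one_lt_div hR₁).2 hR)
  obtain ⟨u, p, hu, hp, hu0, huL, hupos⟩ := exists_good_sol hα hM₁ hM hL0
  obtain ⟨hC2, heq⟩ := build_solution hα hL0 hu hp
  have heq' : ∀ y ∈ Set.Ioo (0 : ℝ) L,
      deriv (fun t => Real.exp (-2 * t) * deriv u t) y =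
        2 * Real.exp (-2 * y) *
          ((α - 1) * Real.exp (-4 * u y) +
            (α / 2) * (Real.exp (2 * u y) - 3 * Real.exp (-2 * u y)) + 1) := by
    intro y hy
    rw [heq y hy]
    rfl
  have hsol : IsSimplifiedSolution α M₁ M₂ L u := ⟨hC2, hupos, heq', hu0, huL⟩
  refine ⟨u, hsol, ?_⟩
  intro u₂ h₂
  obtain ⟨h2C, h2pos, h2eq, h20, h2L⟩ := h₂
  have h2eq' : ∀ y ∈ Set.Ioo (0 : ℝ) L,
      deriv (fun t => Real.exp (-2 * t) * deriv u₂ t) y =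
        2 * Real.exp (-2 * y) * fRHS α (u₂ y) := by
    intro y hy
    rw [h2eq y hy]
    rfl
  intro y hy
  have hle1 := sol_le hα hL0 h2C h2pos h2eq' h20 h2L hC2 hupos heq hu0 huL y hy
  have hle2 := sol_le hα hL0 hC2 hupos heq hu0 huL h2C h2pos h2eq' h20 h2L y hy
  exact le_antisymm hle1 hle2
end
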